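/- arXiv:2310.13554 — 8 statements merged into one kernel-verified Lean document; each statement's English description precedes it below -/
import Mathlib

section
/- Let X be a finite metric space and D > 0. Then X admits a finite, 2D-bounded covering (B_i)_{i∈I} (each member has diameter at most 2D) such that for every x ∈ X, the number of indices i with B(x, D/2) ⊆ B_i, divided by the number of indices i with x ∈ B_i, is at least #B(x, D/2) / #B(x, 2D), where B(x,r) denotes the closed ball and # denotes cardinality. -/
open Metric Set

/-- Padded decompositions of finite metric spaces: a finite metric space admits a finite
`2D`-bounded covering such that for each `x`, the proportion of members containing the
ball `B(x, D/2)` among the members containing `x` is at least `#B(x, D/2) / #B(x, 2D)`. -/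
theorem finite_padded_covering {X : Type*} [MetricSpace X] [Fintype X]
    (D : ℝ) (hD : 0 < D) :
    ∃ (ι : Type) (_ : Fintype ι) (B : ι → Set X),
      (⋃ i, B i) = Set.univ ∧
      (∀ i, Metric.diam (B i) ≤ 2 * D) ∧
      ∀ x : X,
        ((Set.ncard (closedBall x (D / 2)) : ℝ) / (Set.ncard (closedBall x (2 * D)) : ℝ)) ≤
          ((Set.ncard {i | closedBall x (D / 2) ⊆ B i} : ℝ) /
            (Set.ncard {i | x ∈ B i} : ℝ)) := by
  classical
  set n := Fintype.card X
  set e : Fin n ≃ X := (Fintype.equivFin X).symm with he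
  refine ⟨Fin n, inferInstance, fun i => closedBall (e i) D, ?_, ?_, ?_⟩
  · apply Set.eq_univ_of_forall
    intro x
    exact Set.mem_iUnion.2 ⟨e.symm x, by simp [hD.le]⟩
  · intro i
    exact (diam_closedBall hD.le)
  · intro x
    have hsub1 : e.symm '' closedBall x (D / 2) ⊆
        {i | closedBall x (D / 2) ⊆ closedBall (e i) D} := by
      rintro _ ⟨y, hy, rfl⟩
      intro z hz
      simp only [mem_closedBall, Equiv.apply_symm_apply] at *
      calc dist z y ≤ dist z x + dist x y := dist_triangle _ _ _
        _ ≤ D / 2 + D / 2 := add_le_add hz (dist_comm x y ▸ hy)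
        _ = D := by ring
    have hsub2 : {i | x ∈ closedBall (e i) D} ⊆ e.symm '' closedBall x (2 * D) := by
      intro i hi
      refine ⟨e i, ?_, e.symm_apply_apply i⟩
      simp only [mem_setOf_eq, mem_closedBall] at hi
      rw [mem_closedBall, dist_comm]
      linarith
    have h1 : (Set.ncard (closedBall x (D / 2)) : ℝ) ≤
        Set.ncard {i | closedBall x (D / 2) ⊆ closedBall (e i) D} := by
      have := Set.ncard_le_ncard hsub1 (Set.toFinite _)
      rw [Set.ncard_image_of_injective _ e.symm.injective] at this
      exact_mod_cast this
    have h2 : (Set.ncard {i | x ∈ closedBall (e i) D} : ℝ) ≤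
        Set.ncard (closedBall x (2 * D)) := by
      have := Set.ncard_le_ncard hsub2 (Set.toFinite _)
      rw [Set.ncard_image_of_injective _ e.symm.injective] at this
      exact_mod_cast this
    have hpos : (0 : ℝ) < Set.ncard {i | x ∈ closedBall (e i) D} := by
      have hm : e.symm x ∈ {i | x ∈ closedBall (e i) D} := by
        simp [hD.le]
      have := (Set.ncard_pos (Set.toFinite _)).2 ⟨_, hm⟩
      exact_mod_cast this
    exact div_le_div₀ (by positivity) h1 hpos h2
end

section
/- Let X be a metric space, A ⊆ X a subset, and U_1, …, U_m open subsets of X covering X \ A. Fix m' ≥ 3 so that at every point of X \ A at most m' of the sets U_i contain that point. Define ψ_i(x) = d(x, X \ U_i)^m with m = log(m'), ψ = Σψ_i, and φ_i = ψ_i/ψ on X \ A. Then for every x ∈ X \ A and every j with d(x, X \ U_j) ≥ t > 0, one has Σ_i Lip φ_i(x) ≤ 2·log(m')·(m')^{1/log(m')}/t ≤ 6·log(m')/t. -/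
open Filter Set Metric

private lemma rpow_sub_rpow_le' {a b p : ℝ} (hb : 0 ≤ b) (hba : b ≤ a) (hp : 1 ≤ p) :
    a ^ p - b ^ p ≤ p * a ^ (p - 1) * (a - b) := by
  have ha : 0 ≤ a := hb.trans hba
  rcases ha.eq_or_lt with h | h
  · have hb0 : b = 0 := le_antisymm (hba.trans h.ge) hb
    simp [← h, hb0, Real.zero_rpow (by positivity : p ≠ 0)]
  · have hs : (-1 : ℝ) ≤ b / a - 1 := by
      have : 0 ≤ b / a := div_nonneg hb ha
      linarith
    have hber := one_add_mul_self_le_rpow_one_add hs hp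
    rw [add_sub_cancel] at hber
    have hap : (0:ℝ) < a ^ p := Real.rpow_pos_of_pos h p
    have hmul := mul_le_mul_of_nonneg_right hber hap.le
    rw [Real.div_rpow hb ha, div_mul_cancel₀] at hmul
    · have hid : a ^ (p - 1) = a ^ p / a := Real.rpow_sub_one h.ne' p
      rw [hid]
      have h2 : (1 + p * (b / a - 1)) * a ^ p = a ^ p + p * (a ^ p / a) * (b - a) := by
        field_simp
      rw [h2] at hmul
      nlinarith
    · positivity

private lemma abs_rpow_sub_rpow_le {a b M p : ℝ} (ha : 0 ≤ a) (hb : 0 ≤ b)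
    (haM : a ≤ M) (hbM : b ≤ M) (hp : 1 ≤ p) :
    |a ^ p - b ^ p| ≤ p * M ^ (p - 1) * |a - b| := by
  have hp0 : (0:ℝ) ≤ p := by linarith
  have key : ∀ u v : ℝ, 0 ≤ v → v ≤ u → u ≤ M →
      u ^ p - v ^ p ≤ p * M ^ (p - 1) * (u - v) := by
    intro u v hv hvu huM
    refine (rpow_sub_rpow_le' hv hvu hp).trans ?_
    have : u ^ (p-1) ≤ M ^ (p-1) := Real.rpow_le_rpow (hv.trans hvu) huM (by linarith)
    have huv : 0 ≤ u - v := by linarith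
    exact mul_le_mul_of_nonneg_right (mul_le_mul_of_nonneg_left this hp0) huv
  rcases le_total b a with h | h
  · rw [abs_of_nonneg (by linarith [Real.rpow_le_rpow hb h hp0] : (0:ℝ) ≤ a ^ p - b ^ p),
      abs_of_nonneg (by linarith : (0:ℝ) ≤ a - b)]
    exact key a b hb h haM
  · rw [abs_of_nonpos (by linarith [Real.rpow_le_rpow ha h hp0] : a ^ p - b ^ p ≤ 0),
      abs_of_nonpos (by linarith : a - b ≤ 0)]
    have := key b a ha h hbM
    linarith

private lemma holder_card {ι : Type*} (s : Finset ι) (a : ι → ℝ) (ha : ∀ i ∈ s, 0 ≤ a i)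
    {q : ℝ} (hq0 : 0 < q) (hq1 : q ≤ 1) :
    ∑ i ∈ s, a i ^ q ≤ (s.card : ℝ) ^ (1 - q) * (∑ i ∈ s, a i) ^ q := by
  rcases s.eq_empty_or_nonempty with rfl | hne
  · simp; positivity
  have hn : (0:ℝ) < s.card := by exact_mod_cast Finset.card_pos.mpr hne
  have hw : ∀ i ∈ s, (0:ℝ) ≤ (s.card : ℝ)⁻¹ := fun _ _ => by positivity
  have hw' : ∑ _i ∈ s, (s.card : ℝ)⁻¹ = 1 := by
    rw [Finset.sum_const, nsmul_eq_mul, mul_inv_cancel₀ hn.ne']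
  have hz : ∀ i ∈ s, (0:ℝ) ≤ a i ^ q := fun i hi => Real.rpow_nonneg (ha i hi) q
  have hp : (1:ℝ) ≤ q⁻¹ := one_le_inv_iff₀.mpr ⟨hq0, hq1⟩
  have key := Real.arith_mean_le_rpow_mean s (fun _ => (s.card : ℝ)⁻¹) (fun i => a i ^ q)
    hw hw' hz hp
  have hrw : ∀ i ∈ s, (a i ^ q) ^ q⁻¹ = a i := by
    intro i hi
    rw [← Real.rpow_mul (ha i hi), mul_inv_cancel₀ hq0.ne', Real.rpow_one]
  have hsum : ∑ i ∈ s, (s.card:ℝ)⁻¹ * (a i ^ q) ^ q⁻¹ = (s.card:ℝ)⁻¹ * ∑ i ∈ s, a i := by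
    rw [Finset.mul_sum]; exact Finset.sum_congr rfl fun i hi => by rw [hrw i hi]
  rw [hsum, one_div, inv_inv] at key
  have hT : 0 ≤ ∑ i ∈ s, a i := Finset.sum_nonneg ha
  rw [Real.mul_rpow (by positivity) hT, ← Finset.mul_sum] at key
  have hpow : (s.card:ℝ) ^ ((1:ℝ)-q) = (s.card:ℝ) * ((s.card:ℝ)⁻¹) ^ q := by
    rw [sub_eq_add_neg, Real.rpow_add hn, Real.rpow_one, Real.rpow_neg hn.le,
      Real.inv_rpow hn.le]
  calc ∑ i ∈ s, a i ^ q = (s.card:ℝ) * ((s.card:ℝ)⁻¹ * ∑ i ∈ s, a i ^ q) := by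
        field_simp
    _ ≤ (s.card:ℝ) * (((s.card:ℝ)⁻¹) ^ q * (∑ i ∈ s, a i) ^ q) :=
        mul_le_mul_of_nonneg_left key hn.le
    _ = (s.card:ℝ) ^ ((1:ℝ)-q) * (∑ i ∈ s, a i) ^ q := by rw [hpow]; ring

/-- The (upper) pointwise Lipschitz constant of `f` at `x`. -/
noncomputable def pointwiseLip {X : Type*} [MetricSpace X] (f : X → ℝ) (x : X) : ℝ :=
  Filter.limsup (fun x' => dist (f x) (f x') / dist x x') (nhdsWithin x {x}ᶜ)

private lemma pointwiseLip_le {X : Type*} [MetricSpace X] {f : X → ℝ} {x : X} {L : ℝ}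
    (hL : 0 ≤ L)
    (h : ∀ ε > 0, ∃ r > 0, ∀ x', dist x x' < r → dist (f x) (f x') ≤ (L + ε) * dist x x') :
    pointwiseLip f x ≤ L := by
  unfold pointwiseLip
  rcases eq_or_neBot (nhdsWithin x {x}ᶜ) with hbot | hne
  · rw [hbot, Filter.limsup_eq]
    have huniv : {a : ℝ | ∀ᶠ x' in (⊥ : Filter X),
        dist (f x) (f x') / dist x x' ≤ a} = Set.univ := by
      ext a; simp
    rw [huniv, Real.sInf_of_not_bddBelow]
    · exact hL
    · rintro ⟨b, hb⟩
      have := hb (Set.mem_univ (b - 1))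
      linarith
  · refine le_of_forall_pos_le_add fun ε hε => ?_
    obtain ⟨r, hr, hball⟩ := h ε hε
    have h1 : ∀ᶠ x' in nhdsWithin x {x}ᶜ, dist x x' < r :=
      Filter.Eventually.filter_mono nhdsWithin_le_nhds
        (Metric.eventually_nhds_iff.mpr ⟨r, hr, fun y hy => by rwa [dist_comm] at hy⟩)
    have hev : ∀ᶠ x' in nhdsWithin x {x}ᶜ, dist (f x) (f x') / dist x x' ≤ L + ε := by
      filter_upwards [h1, self_mem_nhdsWithin] with x' hx'r hx'ne
      have hd : 0 < dist x x' := by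
        rw [dist_pos]
        exact fun e => hx'ne (by simp [e.symm])
      rw [div_le_iff₀ hd]
      exact hball x' hx'r
    exact Filter.limsup_le_of_le (Filter.isCoboundedUnder_le_of_le _ (fun x' => div_nonneg dist_nonneg dist_nonneg)) hev

/-- Johnson–Lindenstrauss–Schechtman partitions of unity: with `ψᵢ(x) = d(x, X∖Uᵢ)^m`,
`m = log m'`, `ψ = Σψᵢ` and `φᵢ = ψᵢ/ψ`, if at most `m'` of the open sets `Uᵢ` contain any
given point of `X ∖ A` and `d(x, X∖Uⱼ) ≥ t > 0`, then
`Σᵢ Lip φᵢ(x) ≤ 2·log(m')·(m')^{1/log m'}/t ≤ 6·log(m')/t`. -/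
theorem partition_of_unity_pointwiseLip_bound {X : Type*} [MetricSpace X]
    (A : Set X) (k : ℕ) (U : Fin k → Set X)
    (hopen : ∀ i, IsOpen (U i)) (hcover : Aᶜ ⊆ ⋃ i, U i)
    (m' : ℕ) (hm' : 3 ≤ m')
    (hmult : ∀ x ∉ A, ∀ S : Finset (Fin k), (∀ i ∈ S, x ∈ U i) → S.card ≤ m')
    (ψ : Fin k → X → ℝ)
    (hψ : ∀ i x, ψ i x = (Metric.infDist x (U i)ᶜ) ^ (Real.log m'))
    (φ : Fin k → X → ℝ)
    (hφ : ∀ i x, φ i x = ψ i x / ∑ j, ψ j x) :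
    ∀ x ∉ A, ∀ j : Fin k, ∀ t : ℝ, 0 < t → t ≤ Metric.infDist x (U j)ᶜ →
      (∑ i, pointwiseLip (φ i) x) ≤ 2 * Real.log m' * (m' : ℝ) ^ ((Real.log m')⁻¹) / t ∧
      2 * Real.log m' * (m' : ℝ) ^ ((Real.log m')⁻¹) / t ≤ 6 * Real.log m' / t := by
  intro x hx j t ht htle
  obtain ⟨m, hmdef⟩ : ∃ m : ℝ, m = Real.log (m' : ℝ) := ⟨_, rfl⟩
  rw [← hmdef] at hψ ⊢
  have hm'3 : (3:ℝ) ≤ (m' : ℝ) := by exact_mod_cast hm'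
  have hm'pos : (0:ℝ) < (m' : ℝ) := by linarith
  have hm1 : 1 < m := by
    rw [hmdef, Real.lt_log_iff_exp_lt hm'pos]
    have := Real.exp_one_lt_d9
    linarith
  have hm0 : (0:ℝ) < m := lt_trans one_pos hm1
  obtain ⟨A', hA'def⟩ : ∃ a : ℝ, a = (m' : ℝ) ^ (m⁻¹) := ⟨_, rfl⟩
  rw [← hA'def]
  have hAe : A' = Real.exp 1 := by
    rw [hA'def, Real.rpow_def_of_pos hm'pos, ← hmdef, mul_inv_cancel₀ hm0.ne']
  have hA3 : A' ≤ 3 := by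
    rw [hAe]; have := Real.exp_one_lt_d9; linarith
  have hA'nn : 0 ≤ A' := by rw [hAe]; positivity
  refine ⟨?_, ?_⟩; swap
  · rw [div_le_div_iff₀ ht ht]
    have h1 : 2 * m * t * A' ≤ 2 * m * t * 3 :=
      mul_le_mul_of_nonneg_left hA3 (by positivity)
    nlinarith
  obtain ⟨d, hddef⟩ : ∃ d : Fin k → ℝ, d = fun l => Metric.infDist x (U l)ᶜ := ⟨_, rfl⟩
  have hdnn : ∀ l, 0 ≤ d l := fun l => by rw [hddef]; exact Metric.infDist_nonneg
  have htlej : t ≤ d j := by rw [hddef]; exact htle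
  obtain ⟨P, hPdef⟩ : ∃ P : ℝ, P = ∑ l, d l ^ m := ⟨_, rfl⟩
  have hψx : ∀ l, ψ l x = d l ^ m := fun l => by rw [hψ l x, hddef]
  have hPsum : ∑ l, ψ l x = P := by
    rw [hPdef]; exact Finset.sum_congr rfl fun l _ => hψx l
  have htm : t ^ m ≤ P := by
    rw [hPdef]
    calc t ^ m ≤ d j ^ m := Real.rpow_le_rpow ht.le htlej hm0.le
      _ ≤ ∑ l, d l ^ m := Finset.single_le_sum
          (fun l _ => Real.rpow_nonneg (hdnn l) m) (Finset.mem_univ j)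
  have hPpos : 0 < P := lt_of_lt_of_le (Real.rpow_pos_of_pos ht m) htm
  obtain ⟨S, hSdef⟩ : ∃ S : Finset (Fin k), S = Finset.univ.filter fun l => 0 < d l :=
    ⟨_, rfl⟩
  have hScard : (S.card : ℝ) ≤ (m' : ℝ) := by
    have hc : S.card ≤ m' := by
      apply hmult x hx S
      intro i hi
      rw [hSdef] at hi
      have hdi : 0 < d i := (Finset.mem_filter.mp hi).2
      simp only [hddef] at hdi
      by_contra hxi
      have : Metric.infDist x (U i)ᶜ = 0 := Metric.infDist_zero_of_mem hxi
      rw [this] at hdi; exact lt_irrefl 0 hdi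
    exact_mod_cast hc
  have hd0 : ∀ l, l ∉ S → d l = 0 := by
    intro l hl
    rw [hSdef] at hl
    have hnl : ¬ 0 < d l := fun hpos =>
      hl (Finset.mem_filter.mpr ⟨Finset.mem_univ l, hpos⟩)
    linarith [hdnn l, not_lt.mp hnl]
  obtain ⟨K, hKdef⟩ : ∃ K : ℝ, K = m * ∑ l, d l ^ (m - 1) := ⟨_, rfl⟩
  have hKnn : 0 ≤ K := by
    rw [hKdef]
    exact mul_nonneg hm0.le (Finset.sum_nonneg fun l _ => Real.rpow_nonneg (hdnn l) _)
  -- Hölder estimate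
  obtain ⟨q, hqdef⟩ : ∃ q : ℝ, q = (m - 1) / m := ⟨_, rfl⟩
  have hq0 : 0 < q := by rw [hqdef]; exact div_pos (by linarith) hm0
  have hq1 : q ≤ 1 := by rw [hqdef, div_le_one hm0]; linarith
  have hKbound : K ≤ m * (A' * P ^ q) := by
    have hsub1 : ∑ l ∈ S, d l ^ (m - 1) = ∑ l, d l ^ (m - 1) :=
      Finset.sum_subset (Finset.subset_univ S) fun l _ hl => by
        rw [hd0 l hl, Real.zero_rpow (by intro h; rw [sub_eq_zero] at h; linarith)]
    have hsub2 : ∑ l ∈ S, d l ^ m = P :=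
      (Finset.sum_subset (Finset.subset_univ S) fun l _ hl => by
        rw [hd0 l hl, Real.zero_rpow hm0.ne']).trans hPdef.symm
    have hold := holder_card S (fun l => d l ^ m)
      (fun l _ => Real.rpow_nonneg (hdnn l) m) hq0 hq1
    have hterm : ∀ l, (d l ^ m) ^ q = d l ^ (m - 1) := by
      intro l
      rw [← Real.rpow_mul (hdnn l)]
      congr 1
      rw [hqdef, mul_comm, div_mul_cancel₀ _ hm0.ne']
    have h1q : (1:ℝ) - q = m⁻¹ := by rw [hqdef]; field_simp; ring
    rw [hsub2, h1q] at hold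
    have hold2 : ∑ l ∈ S, (d l ^ m) ^ q = ∑ l, d l ^ (m - 1) := by
      rw [← hsub1]; exact Finset.sum_congr rfl fun l _ => hterm l
    rw [hold2] at hold
    have hcardA : (S.card : ℝ) ^ (m⁻¹) ≤ A' := by
      rw [hA'def]
      exact Real.rpow_le_rpow (Nat.cast_nonneg _) hScard (inv_nonneg.mpr hm0.le)
    have hPqnn : 0 ≤ P ^ q := Real.rpow_nonneg hPpos.le q
    calc K = m * ∑ l, d l ^ (m - 1) := hKdef
      _ ≤ m * ((S.card : ℝ) ^ (m⁻¹) * P ^ q) := mul_le_mul_of_nonneg_left hold hm0.le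
      _ ≤ m * (A' * P ^ q) :=
          mul_le_mul_of_nonneg_left (mul_le_mul_of_nonneg_right hcardA hPqnn) hm0.le
  have hPq : P ^ q * t ≤ P := by
    have ht' : t ≤ P ^ m⁻¹ := by
      calc t = (t ^ m) ^ m⁻¹ := by
            rw [← Real.rpow_mul ht.le, mul_inv_cancel₀ hm0.ne', Real.rpow_one]
        _ ≤ P ^ m⁻¹ := Real.rpow_le_rpow (Real.rpow_nonneg ht.le m) htm (inv_nonneg.mpr hm0.le)
    calc P ^ q * t ≤ P ^ q * P ^ m⁻¹ :=
          mul_le_mul_of_nonneg_left ht' (Real.rpow_nonneg hPpos.le q)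
      _ = P := by
          rw [← Real.rpow_add hPpos,
            show q + m⁻¹ = 1 by rw [hqdef]; field_simp; ring, Real.rpow_one]
  -- the candidate pointwise Lipschitz bounds
  obtain ⟨L, hLdef⟩ : ∃ L : Fin k → ℝ,
      L = fun i => ψ i x * K / P ^ 2 + m * d i ^ (m - 1) / P := ⟨_, rfl⟩
  have hψnn : ∀ i, 0 ≤ ψ i x := fun i => by
    rw [hψx i]; exact Real.rpow_nonneg (hdnn i) m
  have hLnn : ∀ i, 0 ≤ L i := by
    intro i
    rw [hLdef]
    have h1 : 0 ≤ ψ i x := hψnn i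
    have h2 : 0 ≤ d i ^ (m - 1) := Real.rpow_nonneg (hdnn i) _
    positivity
  have claim1 : ∀ i, pointwiseLip (φ i) x ≤ L i := by
    intro i
    apply pointwiseLip_le (hLnn i)
    intro ε hε
    obtain ⟨E, hEdef⟩ : ∃ E : ℝ → ℝ,
        E = fun δ => ∑ l, m * (d l + δ) ^ (m - 1) := ⟨_, rfl⟩
    have hE0 : E 0 = K := by
      rw [hEdef, hKdef, Finset.mul_sum]
      simp
    have htermC : ∀ l : Fin k, ContinuousAt (fun δ : ℝ => m * (d l + δ) ^ (m - 1)) 0 := by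
      intro l
      have h2 : ContinuousAt (fun δ : ℝ => d l + δ) 0 :=
        (continuous_const.add continuous_id).continuousAt
      have h1 : ContinuousAt (fun y : ℝ => y ^ (m - 1)) (d l + 0) :=
        Real.continuousAt_rpow_const _ _ (Or.inr (by linarith))
      exact (h1.comp h2).const_mul m
    have hEcont : ContinuousAt E 0 := by
      rw [hEdef]
      exact tendsto_finset_sum _ fun l _ => htermC l
    obtain ⟨G, hGdef⟩ : ∃ G : ℝ → ℝ, G = fun δ =>
        ψ i x * E δ / (P * (P - E δ * δ)) + m * (d i + δ) ^ (m - 1) / (P - E δ * δ) :=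
      ⟨_, rfl⟩
    have hG0 : G 0 = L i := by
      rw [hGdef, hLdef]
      simp only [hE0, mul_zero, sub_zero, add_zero, pow_two]
    have hdenC : ContinuousAt (fun δ : ℝ => P - E δ * δ) 0 :=
      continuousAt_const.sub (hEcont.mul continuousAt_id)
    have hden0 : P - E 0 * 0 = P := by rw [mul_zero, sub_zero]
    have hGcont : ContinuousAt G 0 := by
      rw [hGdef]
      apply ContinuousAt.add
      · exact (continuousAt_const.mul hEcont).div (continuousAt_const.mul hdenC)
          (by simp only [hden0]; positivity)
      · exact (htermC i).div hdenC (by simp only [hden0]; exact hPpos.ne')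
    have hev1 : ∀ᶠ δ in nhds (0:ℝ), G δ < L i + ε :=
      hGcont.eventually_lt_const (by rw [hG0]; linarith)
    have hEd : Filter.Tendsto (fun δ : ℝ => E δ * δ) (nhds 0) (nhds 0) := by
      have h : ContinuousAt (fun δ : ℝ => E δ * δ) 0 := hEcont.mul continuousAt_id
      unfold ContinuousAt at h
      simpa using h
    have hev2 : ∀ᶠ δ in nhds (0:ℝ), E δ * δ < P / 2 :=
      hEd.eventually_lt_const (by positivity)
    obtain ⟨r, hr, hball⟩ := Metric.eventually_nhds_iff.mp (hev1.and hev2)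
    refine ⟨r, hr, fun x' hx' => ?_⟩
    obtain ⟨δ, hδdef⟩ : ∃ δ : ℝ, δ = dist x x' := ⟨_, rfl⟩
    have hδnn : 0 ≤ δ := hδdef ▸ dist_nonneg
    have hδr : dist δ 0 < r := by
      rw [Real.dist_eq, sub_zero, abs_of_nonneg hδnn, hδdef]; exact hx'
    obtain ⟨hGb, hEδ⟩ := hball hδr
    rcases hδnn.eq_or_lt with hδ0 | hδpos
    · have hxx : x = x' := by rw [← dist_eq_zero, ← hδdef, ← hδ0]
      rw [← hxx, dist_self, dist_self, mul_zero]
    · obtain ⟨d', hd'def⟩ : ∃ d' : Fin k → ℝ,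
          d' = fun l => Metric.infDist x' (U l)ᶜ := ⟨_, rfl⟩
      have hd'nn : ∀ l, 0 ≤ d' l := fun l => by rw [hd'def]; exact Metric.infDist_nonneg
      have hψx' : ∀ l, ψ l x' = d' l ^ m := fun l => by rw [hψ l x', hd'def]
      have hlip : ∀ l, |d l - d' l| ≤ δ := by
        intro l
        have h := (Metric.lipschitz_infDist_pt (U l)ᶜ).dist_le_mul x x'
        rw [Real.dist_eq] at h
        rw [hddef, hd'def, hδdef]
        simpa using h
      have hd'le : ∀ l, d' l ≤ d l + δ := fun l => by
        have := abs_le.mp (hlip l); linarith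
      have htermB : ∀ l, |d l ^ m - d' l ^ m| ≤ m * (d l + δ) ^ (m - 1) * δ := by
        intro l
        have h1 := abs_rpow_sub_rpow_le (hdnn l) (hd'nn l)
          (by linarith : d l ≤ d l + δ) (hd'le l) hm1.le
        have h2 : m * (d l + δ) ^ (m - 1) * |d l - d' l| ≤ m * (d l + δ) ^ (m - 1) * δ := by
          apply mul_le_mul_of_nonneg_left (hlip l)
          have h3 : 0 ≤ (d l + δ) ^ (m - 1) := Real.rpow_nonneg (by linarith [hdnn l]) _
          positivity
        exact h1.trans h2
      obtain ⟨P', hP'def⟩ : ∃ P' : ℝ, P' = ∑ l, ψ l x' := ⟨_, rfl⟩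
      have hPP' : |P - P'| ≤ E δ * δ := by
        have hPdiff : P - P' = ∑ l, (d l ^ m - d' l ^ m) := by
          rw [hP'def, hPdef, ← Finset.sum_sub_distrib]
          exact Finset.sum_congr rfl fun l _ => by rw [hψx' l]
        rw [hPdiff]
        calc |∑ l, (d l ^ m - d' l ^ m)| ≤ ∑ l, |d l ^ m - d' l ^ m| :=
              Finset.abs_sum_le_sum_abs _ _
          _ ≤ ∑ l, m * (d l + δ) ^ (m - 1) * δ :=
              Finset.sum_le_sum fun l _ => htermB l
          _ = E δ * δ := by rw [hEdef, Finset.sum_mul]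
      have hP'ge : P - E δ * δ ≤ P' := by
        have := abs_le.mp hPP'; linarith
      have hdenpos : 0 < P - E δ * δ := by linarith
      have hP'pos : 0 < P' := lt_of_lt_of_le hdenpos hP'ge
      have hψiδ : |ψ i x - ψ i x'| ≤ m * (d i + δ) ^ (m - 1) * δ := by
        rw [hψx i, hψx' i]; exact htermB i
      have key : φ i x - φ i x' = (ψ i x * (P' - P) + P * (ψ i x - ψ i x')) / (P * P') := by
        rw [hφ i x, hφ i x', hPsum, ← hP'def]
        field_simp
        ring
      rw [Real.dist_eq, ← hδdef, key, abs_div,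
        abs_of_pos (by positivity : (0:ℝ) < P * P')]
      have hnum : |ψ i x * (P' - P) + P * (ψ i x - ψ i x')| ≤
          ψ i x * (E δ * δ) + P * (m * (d i + δ) ^ (m - 1) * δ) := by
        calc |ψ i x * (P' - P) + P * (ψ i x - ψ i x')|
            ≤ |ψ i x * (P' - P)| + |P * (ψ i x - ψ i x')| := abs_add_le _ _
          _ = ψ i x * |P' - P| + P * |ψ i x - ψ i x'| := by
              rw [abs_mul, abs_mul, abs_of_nonneg (hψnn i), abs_of_pos hPpos]
          _ ≤ ψ i x * (E δ * δ) + P * (m * (d i + δ) ^ (m - 1) * δ) := by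
              have h1 : |P' - P| ≤ E δ * δ := by rw [abs_sub_comm]; exact hPP'
              exact add_le_add (mul_le_mul_of_nonneg_left h1 (hψnn i))
                (mul_le_mul_of_nonneg_left hψiδ hPpos.le)
      have hEnn : 0 ≤ E δ := by
        rw [hEdef]
        exact Finset.sum_nonneg fun l _ =>
          mul_nonneg hm0.le (Real.rpow_nonneg (by linarith [hdnn l]) _)
      have hdinn : 0 ≤ m * (d i + δ) ^ (m - 1) :=
        mul_nonneg hm0.le (Real.rpow_nonneg (by linarith [hdnn i]) _)
      calc |ψ i x * (P' - P) + P * (ψ i x - ψ i x')| / (P * P')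
          ≤ (ψ i x * (E δ * δ) + P * (m * (d i + δ) ^ (m - 1) * δ)) /
              (P * (P - E δ * δ)) := by
            exact div_le_div₀
              (add_nonneg (mul_nonneg (hψnn i) (mul_nonneg hEnn hδnn))
                (mul_nonneg hPpos.le (mul_nonneg hdinn hδnn)))
              hnum (by positivity)
              (mul_le_mul_of_nonneg_left hP'ge hPpos.le)
        _ = G δ * δ := by
            rw [hGdef]
            have hPne : P ≠ 0 := hPpos.ne'
            have hdne : P - E δ * δ ≠ 0 := hdenpos.ne'
            field_simp
        _ ≤ (L i + ε) * δ := mul_le_mul_of_nonneg_right hGb.le hδnn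
  -- summing up
  have hsumL : ∑ i, L i = 2 * K / P := by
    rw [hLdef, Finset.sum_add_distrib]
    have h1 : ∑ i, ψ i x * K / P ^ 2 = K / P := by
      rw [← Finset.sum_div, ← Finset.sum_mul, hPsum, pow_two]
      field_simp
    have h2 : ∑ i, m * d i ^ (m - 1) / P = K / P := by
      rw [← Finset.sum_div, ← Finset.mul_sum, ← hKdef]
    rw [h1, h2]
    ring
  calc ∑ i, pointwiseLip (φ i) x ≤ ∑ i, L i := Finset.sum_le_sum fun i _ => claim1 i
    _ = 2 * K / P := hsumL
    _ ≤ 2 * m * A' / t := by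
        rw [div_le_div_iff₀ hPpos ht]
        have hKb2 : K * t ≤ m * (A' * P ^ q) * t :=
          mul_le_mul_of_nonneg_right hKbound ht.le
        have h3 : m * (A' * P ^ q) * t ≤ m * A' * P := by
          have h4 := mul_le_mul_of_nonneg_left hPq (mul_nonneg hm0.le hA'nn)
          calc m * (A' * P ^ q) * t = m * A' * (P ^ q * t) := by ring
            _ ≤ m * A' * P := h4
        nlinarith
end

section
/- Let Δ and Δ' be two n-simplices in ℓ₂(I) of the form Δ = {x ∈ Σ(I) : Σ_{j∈J} x_j = 1} for (n+1)-point sets J, J' ⊆ I, where Σ(I) = {x ∈ ℓ₂(I) : x_i ≥ 0, Σ x_i = 1}, and suppose Δ ∩ Δ' ≠ ∅. Then for all x ∈ Δ and y ∈ Δ', there exists z ∈ Δ ∩ Δ' such that |x − z| + |z − y| ≤ 4·√n·|x − y|, where |·| is the ℓ₂-norm. -/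
open Set

lemma lp_norm_sq_eq_sum {I : Type*} (f : lp (fun _ : I => ℝ) 2) (S : Finset I)
    (h : ∀ i ∉ S, f i = 0) : ‖f‖ ^ 2 = ∑ i ∈ S, (f i) ^ 2 := by
  have h1 : ‖f‖ ^ 2 = ∑' i, f i * f i := by
    rw [← real_inner_self_eq_norm_sq, lp.inner_eq_tsum]
    rfl
  rw [h1, tsum_eq_sum (s := S) (fun i hi => by rw [h i hi]; ring)]
  exact Finset.sum_congr rfl fun i _ => (sq (f i)).symm

lemma support_lemma {I : Type*} (f : lp (fun _ : I => ℝ) 2) (J : Finset I)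
    (h0 : ∀ i, 0 ≤ f i) (hs : HasSum (fun i => f i) 1) (hJ : ∑ j ∈ J, f j = 1) :
    ∀ i ∉ J, f i = 0 := by
  classical
  intro i hi
  have := sum_le_hasSum (insert i J) (fun j _ => h0 j) hs
  rw [Finset.sum_insert hi, hJ] at this
  linarith [h0 i]

set_option maxHeartbeats 1000000 in
/-- Two intersecting `n`-simplices `Δ, Δ'` in `Σ(I) ⊆ ℓ₂(I)` admit, for any `x ∈ Δ` and
`y ∈ Δ'`, a point `z ∈ Δ ∩ Δ'` with `|x−z| + |z−y| ≤ 4√n·|x−y|`. -/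
theorem simplices_intersection_detour {I : Type*} (n : ℕ)
    (J J' : Finset I) (hJ : J.card = n + 1) (hJ' : J'.card = n + 1)
    (Δ Δ' : Set (lp (fun _ : I => ℝ) 2))
    (hΔ : Δ = {x | (∀ i, 0 ≤ x i) ∧ HasSum (fun i => x i) 1 ∧ ∑ j ∈ J, x j = 1})
    (hΔ' : Δ' = {x | (∀ i, 0 ≤ x i) ∧ HasSum (fun i => x i) 1 ∧ ∑ j ∈ J', x j = 1})
    (hne : (Δ ∩ Δ').Nonempty)
    (x y : lp (fun _ : I => ℝ) 2) (hx : x ∈ Δ) (hy : y ∈ Δ') :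
    ∃ z ∈ Δ ∩ Δ', ‖x - z‖ + ‖z - y‖ ≤ 4 * Real.sqrt n * ‖x - y‖ := by
  classical
  subst hΔ hΔ'
  obtain ⟨hx0, hxs, hxJ⟩ := hx
  obtain ⟨hy0, hys, hyJ'⟩ := hy
  obtain ⟨w, ⟨⟨hw0, hws, hwJ⟩, ⟨_, _, hwJ'⟩⟩⟩ := hne
  have hxsupp : ∀ i ∉ J, x i = 0 := support_lemma x J hx0 hxs hxJ
  have hysupp : ∀ i ∉ J', y i = 0 := support_lemma y J' hy0 hys hyJ'
  have hwsJ : ∀ i ∉ J, w i = 0 := support_lemma w J hw0 hws hwJ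
  have hwsJ' : ∀ i ∉ J', w i = 0 := support_lemma w J' hw0 hws hwJ'
  set K := J ∩ J' with hKdef
  have hKJ : K ⊆ J := Finset.inter_subset_left
  have hKJ' : K ⊆ J' := Finset.inter_subset_right
  have hwsuppK : ∀ i ∉ K, w i = 0 := by
    intro i hi
    rw [hKdef, Finset.mem_inter, not_and_or] at hi
    rcases hi with h | h
    · exact hwsJ i h
    · exact hwsJ' i h
  have hwK : ∑ k ∈ K, w k = 1 := by
    rw [← hwJ]
    exact Finset.sum_subset hKJ (fun i _ hiK => hwsuppK i hiK)
  have hKne : K.Nonempty := by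
    rcases Finset.eq_empty_or_nonempty K with h | h
    · rw [h, Finset.sum_empty] at hwK; norm_num at hwK
    · exact h
  -- difference x - y supported on J ∪ J'
  have hxysupp : ∀ i ∉ J ∪ J', (x - y) i = 0 := by
    intro i hi
    rw [Finset.mem_union, not_or] at hi
    rw [lp.coeFn_sub, Pi.sub_apply, hxsupp i hi.1, hysupp i hi.2, sub_zero]
  have hxy_sq : ‖x - y‖ ^ 2 = ∑ i ∈ J ∪ J', ((x - y) i) ^ 2 :=
    lp_norm_sq_eq_sum _ _ hxysupp
  have hA : ∑ i ∈ J \ K, (x i) ^ 2 ≤ ‖x - y‖ ^ 2 := by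
    rw [hxy_sq]
    have hsub : J \ K ⊆ J ∪ J' := (Finset.sdiff_subset).trans Finset.subset_union_left
    calc ∑ i ∈ J \ K, (x i) ^ 2 = ∑ i ∈ J \ K, ((x - y) i) ^ 2 := by
          refine Finset.sum_congr rfl fun i hi => ?_
          rw [Finset.mem_sdiff, hKdef, Finset.mem_inter, not_and] at hi
          rw [lp.coeFn_sub, Pi.sub_apply, hysupp i (hi.2 hi.1), sub_zero]
      _ ≤ _ := Finset.sum_le_sum_of_subset_of_nonneg hsub (fun i _ _ => sq_nonneg _)
  set s : ℝ := ∑ k ∈ K, x k with hsdef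
  have hs0 : 0 ≤ s := Finset.sum_nonneg fun k _ => hx0 k
  have h1s : ∑ i ∈ J \ K, x i = 1 - s := by
    rw [Finset.sum_sdiff_eq_sub hKJ, hxJ]
  have hcard : ((J \ K).card : ℝ) ≤ n := by
    have : (J \ K).card ≤ n := by
      rw [Finset.card_sdiff_of_subset hKJ, hJ]
      have := Finset.card_pos.mpr hKne
      omega
    exact_mod_cast this
  have hCS : (1 - s) ^ 2 ≤ (n : ℝ) * ‖x - y‖ ^ 2 := by
    calc (1 - s) ^ 2 = (∑ i ∈ J \ K, x i) ^ 2 := by rw [h1s]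
      _ ≤ (J \ K).card * ∑ i ∈ J \ K, (x i) ^ 2 := sq_sum_le_card_mul_sum_sq
      _ ≤ (n : ℝ) * ‖x - y‖ ^ 2 := by
          apply mul_le_mul hcard hA (Finset.sum_nonneg fun i _ => sq_nonneg _) (Nat.cast_nonneg n)
  have hrn : Real.sqrt n * Real.sqrt n = n := Real.mul_self_sqrt (Nat.cast_nonneg n)
  rcases Nat.eq_zero_or_pos n with hn | hn
  · -- n = 0 case
    subst hn
    obtain ⟨j, hj⟩ := Finset.card_eq_one.mp hJ
    obtain ⟨j', hj'⟩ := Finset.card_eq_one.mp hJ'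
    have hjj' : j = j' := by
      obtain ⟨k, hk⟩ := hKne
      rw [hKdef, Finset.mem_inter, hj, hj', Finset.mem_singleton, Finset.mem_singleton] at hk
      rw [← hk.1, hk.2]
    subst hjj'
    have hxy : x = y := by
      apply lp.ext
      funext i
      rw [hj, Finset.sum_singleton] at hxJ
      rw [hj', Finset.sum_singleton] at hyJ'
      by_cases hij : i = j
      · subst hij; rw [hxJ, hyJ']
      · rw [hxsupp i (by rw [hj]; simpa using hij), hysupp i (by rw [hj']; simpa using hij)]
    refine ⟨x, ⟨⟨hx0, hxs, hxJ⟩, ⟨hx0, hxs, by rw [hxy]; exact hyJ'⟩⟩, ?_⟩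
    rw [hxy]
    simp
  · -- n ≥ 1
    have hn1 : (1 : ℝ) ≤ n := by exact_mod_cast hn
    have hrn1 : (1 : ℝ) ≤ Real.sqrt n := Real.one_le_sqrt.mpr hn1
    have hrnn : Real.sqrt n ≤ n := by
      nlinarith [Real.sqrt_nonneg (n : ℝ)]
    rcases eq_or_lt_of_le hs0 with hs | hs
    · -- s = 0 : use z = w
      have h1 : (1:ℝ) ≤ (n : ℝ) * ‖x - y‖ ^ 2 := by
        rw [← hs] at hCS; simpa using hCS
      have hb : 1 ≤ Real.sqrt n * ‖x - y‖ := by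
        nlinarith [Real.sqrt_nonneg (n:ℝ), norm_nonneg (x - y),
          mul_nonneg (Real.sqrt_nonneg (n:ℝ)) (norm_nonneg (x - y))]
      have normle : ∀ (f : lp (fun _ : I => ℝ) 2) (S : Finset I), (∀ i, 0 ≤ f i) →
          (∀ i ∉ S, f i = 0) → (∑ i ∈ S, f i = 1) → ‖f‖ ≤ 1 := by
        intro f S h0 hsupp hsum
        have h2 : ‖f‖ ^ 2 = ∑ i ∈ S, (f i) ^ 2 := lp_norm_sq_eq_sum f S hsupp
        have h3 : ∑ i ∈ S, (f i) ^ 2 ≤ (∑ i ∈ S, f i) ^ 2 :=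
          Finset.sum_sq_le_sq_sum_of_nonneg (fun i _ => h0 i)
        rw [hsum] at h3
        nlinarith [norm_nonneg f]
      have hxle := normle x J hx0 hxsupp hxJ
      have hyle := normle y J' hy0 hysupp hyJ'
      have hwle := normle w K hw0 hwsuppK hwK
      refine ⟨w, ⟨⟨hw0, hws, hwJ⟩, ⟨hw0, hws, hwJ'⟩⟩, ?_⟩
      have t1 : ‖x - w‖ ≤ 2 := (norm_sub_le x w).trans (by linarith)
      have t2 : ‖w - y‖ ≤ 2 := (norm_sub_le w y).trans (by linarith)
      nlinarith
    · -- s > 0 : use z = x restricted to K, normalized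
      set z : lp (fun _ : I => ℝ) 2 := ∑ k ∈ K, lp.single 2 k (x k / s) with hzdef
      have hzapp : ∀ i, z i = if i ∈ K then x i / s else 0 := by
        intro i
        rw [hzdef, lp.coeFn_sum, Finset.sum_apply]
        simp only [lp.single_apply, Finset.sum_dite_eq, Pi.single_apply, Finset.sum_ite_eq, Finset.sum_ite_eq']

      have hz0 : ∀ i, 0 ≤ z i := by
        intro i; rw [hzapp i]
        split
        · exact div_nonneg (hx0 i) hs0
        · exact le_refl _
      have hzK : ∑ k ∈ K, z k = 1 := by
        have : ∑ k ∈ K, z k = (∑ k ∈ K, x k) / s := by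
          rw [Finset.sum_div]
          exact Finset.sum_congr rfl fun k hk => by rw [hzapp k, if_pos hk]
        rw [this, ← hsdef, div_self (ne_of_gt hs)]
      have hzsupp : ∀ i ∉ K, z i = 0 := fun i hi => by rw [hzapp i, if_neg hi]
      have hzs : HasSum (fun i => z i) 1 := by
        have := hasSum_sum_of_ne_finset_zero (s := K) (f := fun i => z i) (L := SummationFilter.unconditional I)
          (fun i hi => hzsupp i hi)
        rwa [hzK] at this
      have hzJ : ∑ j ∈ J, z j = 1 := by
        rw [← hzK]; exact (Finset.sum_subset hKJ (fun i _ hiK => hzsupp i hiK)).symm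
      have hzJ' : ∑ j ∈ J', z j = 1 := by
        rw [← hzK]; exact (Finset.sum_subset hKJ' (fun i _ hiK => hzsupp i hiK)).symm
      refine ⟨z, ⟨⟨hz0, hzs, hzJ⟩, ⟨hz0, hzs, hzJ'⟩⟩, ?_⟩
      -- bound ‖x - z‖²
      have hxzsupp : ∀ i ∉ J, (x - z) i = 0 := by
        intro i hi
        rw [lp.coeFn_sub, Pi.sub_apply, hxsupp i hi, hzsupp i (fun h => hi (hKJ h)), sub_zero]
      have hxz_sq : ‖x - z‖ ^ 2 = ∑ i ∈ J, ((x - z) i) ^ 2 := lp_norm_sq_eq_sum _ _ hxzsupp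
      have hsplit : ∑ i ∈ J, ((x - z) i) ^ 2
          = ∑ i ∈ J \ K, (x i) ^ 2 + ((1 - s) / s) ^ 2 * ∑ k ∈ K, (x k) ^ 2 := by
        rw [← Finset.sum_sdiff hKJ]
        congr 1
        · refine Finset.sum_congr rfl fun i hi => ?_
          rw [lp.coeFn_sub, Pi.sub_apply, hzsupp i (Finset.mem_sdiff.mp hi).2, sub_zero]
        · rw [Finset.mul_sum]
          refine Finset.sum_congr rfl fun k hk => ?_
          rw [lp.coeFn_sub, Pi.sub_apply, hzapp k, if_pos hk]
          field_simp
          ring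
      have hsumK : ∑ k ∈ K, (x k) ^ 2 ≤ s ^ 2 := by
        rw [hsdef]
        exact Finset.sum_sq_le_sq_sum_of_nonneg (fun k _ => hx0 k)
      have hbound : ‖x - z‖ ^ 2 ≤ ((n : ℝ) + 1) * ‖x - y‖ ^ 2 := by
        rw [hxz_sq, hsplit]
        have h2 : ((1 - s) / s) ^ 2 * ∑ k ∈ K, (x k) ^ 2 ≤ (1 - s) ^ 2 := by
          calc ((1 - s) / s) ^ 2 * ∑ k ∈ K, (x k) ^ 2 ≤ ((1 - s) / s) ^ 2 * s ^ 2 :=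
                mul_le_mul_of_nonneg_left hsumK (sq_nonneg _)
            _ = (1 - s) ^ 2 := by field_simp
        nlinarith
      have hzy : ‖z - y‖ ≤ ‖x - z‖ + ‖x - y‖ := by
        calc ‖z - y‖ ≤ ‖z - x‖ + ‖x - y‖ := norm_sub_le_norm_sub_add_norm_sub z x y
          _ = ‖x - z‖ + ‖x - y‖ := by rw [norm_sub_rev]
      have hxznn := norm_nonneg (x - z)
      have hxynn := norm_nonneg (x - y)
      have haux : (0:ℝ) ≤ 12 * (n:ℝ) - 8 * Real.sqrt n - 3 := by nlinarith
      have h4 : (2 * ‖x - z‖) ^ 2 ≤ ((4 * Real.sqrt n - 1) * ‖x - y‖) ^ 2 := by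
        nlinarith [hbound, mul_nonneg haux (sq_nonneg ‖x - y‖), sq_nonneg ‖x - y‖]
      have key : 2 * ‖x - z‖ ≤ (4 * Real.sqrt n - 1) * ‖x - y‖ := by
        have h5 : (0:ℝ) ≤ (4 * Real.sqrt n - 1) * ‖x - y‖ :=
          mul_nonneg (by linarith) hxynn
        nlinarith [h4, h5]
      linarith [hzy, key]
end

section
/- Let γ ∈ (0, π] and suppose z, x, y are points in a Euclidean space with the angle at z in the triangle x z y at least γ. Let κ = sqrt((1 − cos γ)/2). Then κ·(|x − z| + |z − y|) ≤ |x − y|. -/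
open InnerProductGeometry Real

/-- If the angle at `z` in the triangle `x z y` is at least `γ ∈ (0, π]` and
`κ = √((1 − cos γ)/2)`, then `κ·(|x−z| + |z−y|) ≤ |x−y|`. -/
theorem angle_lower_bound_dist {V : Type*} [NormedAddCommGroup V] [InnerProductSpace ℝ V]
    (x y z : V) (γ : ℝ) (hγ0 : 0 < γ) (hγπ : γ ≤ Real.pi)
    (hangle : γ ≤ InnerProductGeometry.angle (x - z) (y - z)) :
    Real.sqrt ((1 - Real.cos γ) / 2) * (‖x - z‖ + ‖z - y‖) ≤ ‖x - y‖ := by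
  set a := ‖x - z‖ with ha
  set b := ‖y - z‖ with hb
  set c := ‖x - y‖ with hc
  have hzy : ‖z - y‖ = b := norm_sub_rev z y
  rw [hzy]
  set θ := InnerProductGeometry.angle (x - z) (y - z) with hθ
  have hcos : Real.cos θ * (a * b) = inner ℝ (x - z) (y - z) :=
    InnerProductGeometry.cos_angle_mul_norm_mul_norm _ _
  have hlaw : c ^ 2 = a ^ 2 + b ^ 2 - 2 * (Real.cos θ * (a * b)) := by
    have : x - y = (x - z) - (y - z) := by abel
    rw [hcos, hc, this, ha, hb, @norm_sub_sq_real]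
    ring
  have hcosle : Real.cos θ ≤ Real.cos γ :=
    Real.cos_le_cos_of_nonneg_of_le_pi hγ0.le (InnerProductGeometry.angle_le_pi _ _) hangle
  have hab : 0 ≤ a * b := mul_nonneg (norm_nonneg _) (norm_nonneg _)
  have hc2 : a ^ 2 + b ^ 2 - 2 * (Real.cos γ * (a * b)) ≤ c ^ 2 := by
    rw [hlaw]
    nlinarith [mul_le_mul_of_nonneg_right hcosle hab]
  set k := Real.sqrt ((1 - Real.cos γ) / 2) with hk
  have hk0 : 0 ≤ k := Real.sqrt_nonneg _
  have hcγ : Real.cos γ ≤ 1 := Real.cos_le_one γ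
  have hcγ' : -1 ≤ Real.cos γ := Real.neg_one_le_cos γ
  have hk2 : k ^ 2 = (1 - Real.cos γ) / 2 := Real.sq_sqrt (by linarith)
  have ha0 : 0 ≤ a := norm_nonneg _
  have hb0 : 0 ≤ b := norm_nonneg _
  have hc0 : 0 ≤ c := norm_nonneg _
  nlinarith [sq_nonneg (a - b), sq_nonneg (c - k * (a + b)), sq_nonneg (c + k * (a + b)),
    mul_nonneg hk0 (add_nonneg ha0 hb0)]
end

section
/- Let K ⊆ ℝ^n be a convex body containing the origin in its interior, with inradius r = min_{x∈∂K} |x| and circumradius R = max_{x∈∂K} |x| (with respect to the origin). Then the radial projection ρ : K \ B(0,r)° → ∂K, ρ(x) = (t(x))·x where t(x) > 0 is the unique scalar with t(x)·x ∈ ∂K, is (R/r)²-Lipschitz on K \ {x : |x| < r}. -/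
open Metric Set
open scoped RealInnerProductSpace

section Aux

variable {E : Type*} [NormedAddCommGroup E] [InnerProductSpace ℝ E]

/-- Gram determinant of three vectors is nonnegative, in the degenerate case `ν = t • y`. -/
private lemma gram3_dep (t : ℝ) (y m : E) :
    ‖t • y‖ ^ 2 * ⟪y, m⟫ ^ 2 + ‖y‖ ^ 2 * ⟪t • y, m⟫ ^ 2 + ‖m‖ ^ 2 * ⟪t • y, y⟫ ^ 2
      ≤ ‖t • y‖ ^ 2 * ‖y‖ ^ 2 * ‖m‖ ^ 2 + 2 * ⟪t • y, y⟫ * ⟪t • y, m⟫ * ⟪y, m⟫ := by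
  have h1 : ⟪t • y, m⟫ = t * ⟪y, m⟫ := real_inner_smul_left _ _ _
  have h2 : ⟪t • y, y⟫ = t * ‖y‖ ^ 2 := by
    rw [real_inner_smul_left, real_inner_self_eq_norm_sq]
  have h3 : ‖t • y‖ ^ 2 = t ^ 2 * ‖y‖ ^ 2 := by
    rw [norm_smul, mul_pow, Real.norm_eq_abs, sq_abs]
  rw [h1, h2, h3]
  apply le_of_eq
  ring

/-- Gram determinant of three vectors is nonnegative. -/
private lemma gram3 (ν y m : E) :
    ‖ν‖ ^ 2 * ⟪y, m⟫ ^ 2 + ‖y‖ ^ 2 * ⟪ν, m⟫ ^ 2 + ‖m‖ ^ 2 * ⟪ν, y⟫ ^ 2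
      ≤ ‖ν‖ ^ 2 * ‖y‖ ^ 2 * ‖m‖ ^ 2 + 2 * ⟪ν, y⟫ * ⟪ν, m⟫ * ⟪y, m⟫ := by
  have hCS : ⟪ν, y⟫ ^ 2 ≤ ‖ν‖ ^ 2 * ‖y‖ ^ 2 := by
    have h := abs_real_inner_le_norm ν y
    nlinarith [abs_nonneg (⟪ν, y⟫), sq_abs (⟪ν, y⟫), norm_nonneg ν, norm_nonneg y]
  rcases hCS.lt_or_eq with hlt | heq
  · -- nondegenerate case
    have hMpos : 0 < ‖ν‖ ^ 2 * ‖y‖ ^ 2 - ⟪ν, y⟫ ^ 2 := by linarith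
    set w : E := (‖ν‖ ^ 2 * ‖y‖ ^ 2 - ⟪ν, y⟫ ^ 2) • m
        - (‖y‖ ^ 2 * ⟪ν, m⟫ - ⟪ν, y⟫ * ⟪y, m⟫) • ν
        - (‖ν‖ ^ 2 * ⟪y, m⟫ - ⟪ν, y⟫ * ⟪ν, m⟫) • y with hw
    have hkey : ⟪w, w⟫
        = (‖ν‖ ^ 2 * ‖y‖ ^ 2 - ⟪ν, y⟫ ^ 2) * (‖ν‖ ^ 2 * ‖y‖ ^ 2 * ‖m‖ ^ 2
            + 2 * ⟪ν, y⟫ * ⟪ν, m⟫ * ⟪y, m⟫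
            - (‖ν‖ ^ 2 * ⟪y, m⟫ ^ 2 + ‖y‖ ^ 2 * ⟪ν, m⟫ ^ 2 + ‖m‖ ^ 2 * ⟪ν, y⟫ ^ 2)) := by
      have c1 : ⟪m, ν⟫ = ⟪ν, m⟫ := real_inner_comm ν m
      have c2 : ⟪m, y⟫ = ⟪y, m⟫ := real_inner_comm y m
      have c3 : ⟪y, ν⟫ = ⟪ν, y⟫ := real_inner_comm ν y
      simp only [hw, inner_sub_left, inner_sub_right, real_inner_smul_left,
        real_inner_smul_right]
      simp only [c1, c2, c3, real_inner_self_eq_norm_sq]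
      ring
    have hpos : 0 ≤ ⟪w, w⟫ := real_inner_self_nonneg
    rw [hkey] at hpos
    have h2 : (‖ν‖ ^ 2 * ‖y‖ ^ 2 - ⟪ν, y⟫ ^ 2) * 0
        ≤ (‖ν‖ ^ 2 * ‖y‖ ^ 2 - ⟪ν, y⟫ ^ 2) * (‖ν‖ ^ 2 * ‖y‖ ^ 2 * ‖m‖ ^ 2
            + 2 * ⟪ν, y⟫ * ⟪ν, m⟫ * ⟪y, m⟫
            - (‖ν‖ ^ 2 * ⟪y, m⟫ ^ 2 + ‖y‖ ^ 2 * ⟪ν, m⟫ ^ 2 + ‖m‖ ^ 2 * ⟪ν, y⟫ ^ 2)) := by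
      rw [mul_zero]; exact hpos
    have h3 := le_of_mul_le_mul_left h2 hMpos
    linarith
  · -- degenerate case: equality in Cauchy-Schwarz
    rcases eq_or_ne y 0 with hy | hy
    · simp [hy]
    have hy0 : ‖y‖ ≠ 0 := norm_ne_zero_iff.mpr hy
    have hfac : (⟪ν, y⟫ - ‖ν‖ * ‖y‖) * (⟪ν, y⟫ + ‖ν‖ * ‖y‖) = 0 := by nlinarith [heq]
    have hdep : ∃ t : ℝ, ν = t • y := by
      rcases mul_eq_zero.mp hfac with h | h
      · have h' : ⟪ν, y⟫ = ‖ν‖ * ‖y‖ := by linarith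
        have hsm := inner_eq_norm_mul_iff_real.mp h'
        have h3 : ν = (‖y‖)⁻¹ • (‖ν‖ • y) := by
          rw [← hsm, smul_smul, inv_mul_cancel₀ hy0, one_smul]
        refine ⟨‖y‖⁻¹ * ‖ν‖, ?_⟩
        conv_lhs => rw [h3]
        exact smul_smul _ _ _
      · have h' : ⟪ν, -y⟫ = ‖ν‖ * ‖-y‖ := by
          rw [inner_neg_right, norm_neg]; linarith
        have hsm := inner_eq_norm_mul_iff_real.mp h'
        rw [norm_neg] at hsm
        have h3 : ν = (‖y‖)⁻¹ • (‖ν‖ • -y) := by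
          rw [← hsm, smul_smul, inv_mul_cancel₀ hy0, one_smul]
        refine ⟨-(‖y‖⁻¹ * ‖ν‖), ?_⟩
        conv_lhs => rw [h3]
        rw [smul_neg, smul_neg, smul_smul, ← neg_smul]
    obtain ⟨t, rfl⟩ := hdep
    exact gram3_dep t y m

variable {K : Set E}

/-- The closed ball of the inradius is contained in the body. -/
private lemma ball_subset_body (hconv : Convex ℝ K) (hcl : IsClosed K)
    (h0 : 0 ∈ interior K) {r : ℝ} (hr0 : 0 < r)
    (hrmin : ∀ x ∈ frontier K, r ≤ ‖x‖) : closedBall (0 : E) r ⊆ K := by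
  intro w hw
  have hwr : ‖w‖ ≤ r := by simpa using mem_closedBall_zero_iff.mp hw
  by_contra hwK
  have h0K : (0 : E) ∈ K := interior_subset h0
  set S : Set ℝ := Icc (0 : ℝ) 1 ∩ (fun t : ℝ => t • w) ⁻¹' K with hS
  have hScl : IsClosed S :=
    isClosed_Icc.inter (hcl.preimage (continuous_id.smul continuous_const))
  have hScomp : IsCompact S :=
    isCompact_Icc.of_isClosed_subset hScl inter_subset_left
  have hSne : S.Nonempty := ⟨0, ⟨le_refl 0, zero_le_one⟩, by simp [h0K]⟩
  have hSbdd : BddAbove S := ⟨1, fun t ht => ht.1.2⟩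
  set t0 := sSup S with ht0
  have ht0S : t0 ∈ S := hScomp.sSup_mem hSne
  obtain ⟨⟨ht00, ht01⟩, ht0K⟩ := ht0S
  have ht0ne : t0 ≠ 1 := by
    rintro h
    rw [h] at ht0K
    exact hwK (by simpa using ht0K)
  have ht0lt : t0 < 1 := lt_of_le_of_ne ht01 ht0ne
  have hfr : t0 • w ∈ frontier K := by
    rw [hcl.frontier_eq]
    refine ⟨ht0K, fun hint => ?_⟩
    have hopen : IsOpen ((fun t : ℝ => t • w) ⁻¹' interior K) :=
      isOpen_interior.preimage (continuous_id.smul continuous_const)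
    obtain ⟨ε, hε0, hball⟩ := Metric.isOpen_iff.mp hopen t0 hint
    set t1 := min 1 (t0 + ε / 2) with ht1
    have ht1gt : t0 < t1 := lt_min (by linarith) (by linarith)
    have ht1S : t1 ∈ S := by
      refine ⟨⟨by positivity, min_le_left _ _⟩, ?_⟩
      have hmemball : t1 ∈ Metric.ball t0 ε := by
        rw [Metric.mem_ball, Real.dist_eq, abs_lt]
        constructor
        · linarith
        · have : t1 ≤ t0 + ε / 2 := min_le_right _ _
          linarith
      have h5 : t1 • w ∈ interior K := hball hmemball
      exact Set.mem_preimage.mpr (interior_subset h5)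
    exact absurd (le_csSup hSbdd ht1S) (not_le.mpr ht1gt)
  have h1 := hrmin _ hfr
  rw [norm_smul, Real.norm_eq_abs, abs_of_nonneg ht00] at h1
  nlinarith [norm_nonneg w]

/-- Uniqueness of the frontier point on a ray from the origin. -/
private lemma ray_unique (hconv : Convex ℝ K) (h0 : 0 ∈ interior K)
    {z : E} {t1 t2 : ℝ} (h1 : 0 < t1) (h2 : 0 < t2)
    (hf1 : t1 • z ∈ frontier K) (hf2 : t2 • z ∈ frontier K) : t1 = t2 := by
  have main : ∀ s1 s2 : ℝ, 0 < s1 → 0 < s2 → s1 • z ∈ frontier K →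
      s2 • z ∈ frontier K → s1 < s2 → False := by
    intro s1 s2 hs1 hs2 hfs1 hfs2 hlt
    have hint : s1 • z ∈ interior K := by
      have hcl2 : s2 • z ∈ closure K := frontier_subset_closure hfs2
      have := hconv.combo_interior_closure_mem_interior h0 hcl2
        (a := 1 - s1 / s2) (b := s1 / s2)
        (by
          have : s1 / s2 < 1 := (div_lt_one hs2).mpr hlt
          linarith)
        (by positivity) (by ring)
      simpa [smul_smul, div_mul_cancel₀ _ (ne_of_gt hs2)] using this
    exact disjoint_left.mp disjoint_interior_frontier hint hfs1
  rcases lt_trichotomy t1 t2 with h | h | h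
  · exact absurd (main t1 t2 h1 h2 hf1 hf2 h) (by simp)
  · exact h
  · exact absurd (main t2 t1 h2 h1 hf2 hf1 h) (by simp)

/-- Existence of a supporting functional at a boundary point, with a norm lower bound coming
from the inscribed ball. -/
private lemma exists_support (hconv : Convex ℝ K) (hcl : IsClosed K)
    (h0 : 0 ∈ interior K) {r : ℝ} (hr0 : 0 < r)
    (hrmin : ∀ x ∈ frontier K, r ≤ ‖x‖) {v : E} (hv : v ∈ frontier K) :
    ∃ f : E →L[ℝ] ℝ, (∀ z ∈ K, f z ≤ f v) ∧ 0 < f v ∧ r * ‖f‖ ≤ f v := by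
  have hvint : v ∉ interior K :=
    fun h => disjoint_left.mp disjoint_interior_frontier h hv
  obtain ⟨f, hf⟩ := geometric_hahn_banach_open_point hconv.interior isOpen_interior hvint
  have hfv0 : 0 < f v := by
    have := hf 0 h0
    simpa using this
  have hfK : ∀ z ∈ K, f z ≤ f v := by
    intro z hz
    by_contra hlt
    push_neg at hlt
    set θ := (f v + f z) / (2 * f z) with hθ
    have hfz0 : 0 < f z := lt_trans hfv0 hlt
    have hθ0 : 0 < θ := by positivity
    have hθ1 : θ < 1 := by
      rw [hθ, div_lt_one (by positivity)]
      linarith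
    have hmem : θ • z ∈ interior K := by
      have := hconv.combo_interior_closure_mem_interior h0 (subset_closure hz)
        (a := 1 - θ) (b := θ) (by linarith) hθ0.le (by ring)
      simpa using this
    have hlt2 := hf _ hmem
    rw [map_smul] at hlt2
    simp only [smul_eq_mul] at hlt2
    have heqθ : θ * f z = (f v + f z) / 2 := by
      rw [hθ]
      field_simp
    rw [heqθ] at hlt2
    linarith
  have hball := ball_subset_body hconv hcl h0 hr0 hrmin
  have hnorm : ‖f‖ ≤ f v / r := by
    apply ContinuousLinearMap.opNorm_le_bound f (by positivity)
    intro z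
    rcases eq_or_ne z 0 with rfl | hz
    · simp
    have hz0 : 0 < ‖z‖ := norm_pos_iff.mpr hz
    set w : E := (r / ‖z‖) • z with hwdef
    have hwn : ‖w‖ = r := by
      rw [hwdef, norm_smul, Real.norm_eq_abs, abs_of_pos (by positivity),
        div_mul_cancel₀ _ (ne_of_gt hz0)]
    have hwK : w ∈ K := hball (mem_closedBall_zero_iff.mpr (le_of_eq hwn))
    have hwK' : -w ∈ K := hball (mem_closedBall_zero_iff.mpr (by rw [norm_neg]; exact le_of_eq hwn))
    have h1 : f w ≤ f v := hfK _ hwK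
    have h2 : -(f w) ≤ f v := by
      have := hfK _ hwK'
      rwa [map_neg] at this
    have habs : |f w| ≤ f v := abs_le.mpr ⟨by linarith, h1⟩
    have hfw : f w = (r / ‖z‖) * f z := by rw [hwdef, map_smul]; simp
    rw [hfw, abs_mul, abs_of_pos (by positivity : (0:ℝ) < r / ‖z‖)] at habs
    rw [Real.norm_eq_abs]
    rw [div_mul_eq_mul_div, le_div_iff₀ hr0]
    calc |f z| * r = (r / ‖z‖ * |f z|) * ‖z‖ := by field_simp
      _ ≤ f v * ‖z‖ := by
          apply mul_le_mul_of_nonneg_right habs hz0.le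
  refine ⟨f, hfK, hfv0, ?_⟩
  rw [le_div_iff₀ hr0] at hnorm
  linarith

end Aux

section Sphere

variable {E : Type*} [NormedAddCommGroup E] [InnerProductSpace ℝ E] [CompleteSpace E]
variable {K : Set E}

set_option maxHeartbeats 1000000 in
private lemma key_ineq {r R s p q d A L fx fy : ℝ}
    (hr0 : 0 < r) (hs0 : 0 < s)
    (hp : 0 < p) (hq : 0 < q) (hpq : q ≤ p)
    (hqfy : q * fy = A) (hpfx : p * fx ≤ A) (hA : 0 < A) (hrL : r * L ≤ A) (hL0 : 0 ≤ L)
    (hpsr : r ≤ p * s) (hpsR : p * s ≤ R) (hqsR : q * s ≤ R)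
    (hd0 : 0 ≤ d) (hd2s : d ≤ 2 * s)
    (G : L ^ 2 * (d ^ 2 / 2) ^ 2 + s ^ 2 * (fy - fx) ^ 2 + d ^ 2 * fy ^ 2
        ≤ L ^ 2 * s ^ 2 * d ^ 2 + 2 * fy * (fy - fx) * (d ^ 2 / 2)) :
    ((p - q) ^ 2 * s ^ 2 + p * q * d ^ 2) * (r ^ 2 * s ^ 2) ≤ R ^ 4 * d ^ 2 := by
  have hfy0 : 0 < fy := by
    rcases le_or_gt fy 0 with h | h
    · exfalso
      have h2 : q * fy ≤ 0 := mul_nonpos_of_nonneg_of_nonpos hq.le h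
      rw [hqfy] at h2
      linarith
    · exact h
  have hrR : r ≤ R := le_trans hpsr hpsR
  have hR0 : 0 ≤ R := le_trans hr0.le hrR
  rcases le_or_gt ((p - q) * s ^ 2) (p * d ^ 2) with hcase | hcase
  · -- easy case
    have h1 := mul_le_mul_of_nonneg_left hcase (sub_nonneg.mpr hpq)
    have h1' : (p - q) ^ 2 * s ^ 2 + p * q * d ^ 2 ≤ p ^ 2 * d ^ 2 := by
      ring_nf at h1 ⊢
      linarith
    have h2 : (p * s) * (p * s) ≤ R * R := mul_le_mul hpsR hpsR (by positivity) hR0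
    have hr2 : r * r ≤ R * R := mul_le_mul hrR hrR hr0.le hR0
    calc ((p - q) ^ 2 * s ^ 2 + p * q * d ^ 2) * (r ^ 2 * s ^ 2)
        ≤ (p ^ 2 * d ^ 2) * (r ^ 2 * s ^ 2) :=
          mul_le_mul_of_nonneg_right h1' (by positivity)
      _ = ((p * s) * (p * s)) * (r ^ 2 * d ^ 2) := by ring
      _ ≤ (R * R) * (r ^ 2 * d ^ 2) :=
          mul_le_mul_of_nonneg_right h2 (by positivity)
      _ = (r * r) * ((R * R) * d ^ 2) := by ring
      _ ≤ (R * R) * ((R * R) * d ^ 2) :=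
          mul_le_mul_of_nonneg_right hr2 (by positivity)
      _ = R ^ 4 * d ^ 2 := by ring
  · -- main case
    have st1 : (p - q) * fy ≤ p * (fy - fx) := by
      ring_nf
      nlinarith [hpfx, hqfy]
    have fact1 : 0 ≤ p * (fy - fx) - (p - q) * fy := by linarith
    have fact2 : 0 ≤ s ^ 2 * (p * (fy - fx) + (p - q) * fy) - p * fy * d ^ 2 := by
      have m1 := mul_le_mul_of_nonneg_left hcase.le hfy0.le
      have m2 := mul_le_mul_of_nonneg_left st1 (sq_nonneg s)
      have m3 : 0 ≤ (p - q) * fy * s ^ 2 :=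
        mul_nonneg (mul_nonneg (sub_nonneg.mpr hpq) hfy0.le) (sq_nonneg s)
      ring_nf at m1 m2 m3 ⊢
      linarith
    have st2 : (p - q) ^ 2 * fy ^ 2 * s ^ 2 - p * (p - q) * fy ^ 2 * d ^ 2
        ≤ p ^ 2 * s ^ 2 * (fy - fx) ^ 2 - p ^ 2 * fy * (fy - fx) * d ^ 2 := by
      have h := mul_nonneg fact1 fact2
      ring_nf at h ⊢
      linarith
    have st3 : s ^ 2 * (fy - fx) ^ 2 - fy * (fy - fx) * d ^ 2
        ≤ L ^ 2 * s ^ 2 * d ^ 2 - L ^ 2 * d ^ 4 / 4 - fy ^ 2 * d ^ 2 := by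
      ring_nf at G ⊢
      linarith
    have st4 := mul_le_mul_of_nonneg_left st3 (sq_nonneg p)
    have comb : (p - q) ^ 2 * fy ^ 2 * s ^ 2
        ≤ p * (p - q) * fy ^ 2 * d ^ 2 + p ^ 2 * L ^ 2 * s ^ 2 * d ^ 2
          - p ^ 2 * L ^ 2 * d ^ 4 / 4 - p ^ 2 * fy ^ 2 * d ^ 2 := by
      ring_nf at st2 st4 ⊢
      linarith
    have hrL2 : r ^ 2 * L ^ 2 ≤ q ^ 2 * fy ^ 2 := by
      have hA' : r * L ≤ q * fy := by rw [hqfy]; exact hrL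
      have h := mul_self_le_mul_self (mul_nonneg hr0.le hL0) hA'
      ring_nf at h ⊢
      linarith
    have hps2 : (p * s) ^ 2 ≤ R ^ 2 := pow_le_pow_left₀ (by positivity) hpsR 2
    have hqs2 : (q * s) ^ 2 ≤ R ^ 2 := pow_le_pow_left₀ (by positivity) hqsR 2
    have hPQ : (p * s) ^ 2 * (q * s) ^ 2 ≤ R ^ 4 := by
      have h := mul_le_mul hps2 hqs2 (sq_nonneg _) (sq_nonneg R)
      ring_nf at h ⊢
      linarith
    have hs4 : 0 ≤ s ^ 2 - d ^ 2 / 4 := by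
      have h := mul_le_mul hd2s hd2s hd0 (by positivity : (0:ℝ) ≤ 2 * s)
      ring_nf at h ⊢
      linarith
    have keyfy : ((p - q) ^ 2 * s ^ 2 + p * q * d ^ 2) * (r ^ 2 * s ^ 2) * fy ^ 2
        ≤ R ^ 4 * d ^ 2 * fy ^ 2 := by
      have hcomb' := mul_le_mul_of_nonneg_left comb
        (by positivity : (0:ℝ) ≤ r ^ 2 * s ^ 2)
      have h31 : s ^ 2 * p ^ 2 * q ^ 2 * (s ^ 2 - d ^ 2 / 4) ≤ (p * s) ^ 2 * (q * s) ^ 2 := by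
        have h := mul_nonneg (mul_nonneg (mul_nonneg (sq_nonneg s) (sq_nonneg p))
          (sq_nonneg q)) (sq_nonneg d)
        ring_nf at h ⊢
        linarith
      have h32 : s ^ 2 * p ^ 2 * q ^ 2 * (s ^ 2 - d ^ 2 / 4) ≤ R ^ 4 := h31.trans hPQ
      have hc1 : ((p - q) ^ 2 * s ^ 2 + p * q * d ^ 2) * (r ^ 2 * s ^ 2) * fy ^ 2
          ≤ r ^ 2 * s ^ 2 * p ^ 2 * L ^ 2 * d ^ 2 * (s ^ 2 - d ^ 2 / 4) := by
        ring_nf at hcomb' ⊢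
        linarith
      calc ((p - q) ^ 2 * s ^ 2 + p * q * d ^ 2) * (r ^ 2 * s ^ 2) * fy ^ 2
          ≤ r ^ 2 * s ^ 2 * p ^ 2 * L ^ 2 * d ^ 2 * (s ^ 2 - d ^ 2 / 4) := hc1
        _ = (r ^ 2 * L ^ 2) * (s ^ 2 * p ^ 2 * d ^ 2 * (s ^ 2 - d ^ 2 / 4)) := by ring
        _ ≤ (q ^ 2 * fy ^ 2) * (s ^ 2 * p ^ 2 * d ^ 2 * (s ^ 2 - d ^ 2 / 4)) :=
            mul_le_mul_of_nonneg_right hrL2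
              (mul_nonneg (by positivity) hs4)
        _ = (s ^ 2 * p ^ 2 * q ^ 2 * (s ^ 2 - d ^ 2 / 4)) * (fy ^ 2 * d ^ 2) := by ring
        _ ≤ R ^ 4 * (fy ^ 2 * d ^ 2) :=
            mul_le_mul_of_nonneg_right h32 (by positivity)
        _ = R ^ 4 * d ^ 2 * fy ^ 2 := by ring
    exact le_of_mul_le_mul_right keyfy (by positivity)

/-- Sphere case with the extra assumption `q ≤ p`. -/
private lemma sphere_aux (hconv : Convex ℝ K) (hcl : IsClosed K) (h0 : 0 ∈ interior K)
    {r R s p q : ℝ} {x y u v : E}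
    (hr0 : 0 < r)
    (hrmin : ∀ w ∈ frontier K, r ≤ ‖w‖)
    (hRmax : ∀ w ∈ frontier K, ‖w‖ ≤ R)
    (hxs : ‖x‖ = s) (hys : ‖y‖ = s) (hrs : r ≤ s)
    (hu : u ∈ frontier K) (hv : v ∈ frontier K)
    (hup : u = p • x) (hvq : v = q • y) (hp : 0 < p) (hq : 0 < q) (hpq : q ≤ p) :
    ‖u - v‖ ≤ R ^ 2 / (r * s) * ‖x - y‖ := by
  have hs0 : 0 < s := lt_of_lt_of_le hr0 hrs
  obtain ⟨f, hfK, hA, hrL⟩ := exists_support hconv hcl h0 hr0 hrmin hv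
  have hqfy : q * f y = f v := by
    conv_rhs => rw [hvq]
    rw [map_smul]; simp
  have huK : u ∈ K := by
    have := frontier_subset_closure hu
    rwa [hcl.closure_eq] at this
  have hpfx : p * f x ≤ f v := by
    have := hfK u huK
    rwa [hup, map_smul, smul_eq_mul] at this
  have hun : ‖u‖ = p * s := by
    rw [hup, norm_smul, Real.norm_eq_abs, abs_of_pos hp, hxs]
  have hvn : ‖v‖ = q * s := by
    rw [hvq, norm_smul, Real.norm_eq_abs, abs_of_pos hq, hys]
  have hpsr : r ≤ p * s := hun ▸ hrmin u hu
  have hpsR : p * s ≤ R := hun ▸ hRmax u hu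
  have hqsR : q * s ≤ R := hvn ▸ hRmax v hv
  have hd0 : 0 ≤ ‖x - y‖ := norm_nonneg _
  have hd2s : ‖x - y‖ ≤ 2 * s := by
    have h := norm_sub_le x y
    rw [hxs, hys] at h
    linarith
  have hip : ‖x - y‖ ^ 2 = 2 * s ^ 2 - 2 * ⟪x, y⟫ := by
    rw [norm_sub_sq_real, hxs, hys]; ring
  -- Gram inequality
  set ν : E := (InnerProductSpace.toDual ℝ E).symm f with hνdef
  have hν : ∀ z : E, ⟪ν, z⟫ = f z := fun z => InnerProductSpace.toDual_symm_apply
  have hνn : ‖ν‖ = ‖f‖ := by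
    rw [hνdef, LinearIsometryEquiv.norm_map]
  have hyx : ⟪y, x⟫ = ⟪x, y⟫ := real_inner_comm x y
  have hym : ⟪y, y - x⟫ = ‖x - y‖ ^ 2 / 2 := by
    rw [inner_sub_right, real_inner_self_eq_norm_sq, hys, hyx]
    linarith
  have hνm : ⟪ν, y - x⟫ = f y - f x := by
    rw [hν, map_sub]
  have hνy : ⟪ν, y⟫ = f y := hν y
  have hmn : ‖y - x‖ = ‖x - y‖ := norm_sub_rev y x
  have G := gram3 ν y (y - x)
  rw [hym, hνm, hνy, hνn, hmn, hys] at G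
  have key := key_ineq hr0 hs0 hp hq hpq hqfy hpfx hA hrL (norm_nonneg f)
    hpsr hpsR hqsR hd0 hd2s G
  -- conclude
  have huv : ‖u - v‖ ^ 2 = (p - q) ^ 2 * s ^ 2 + p * q * ‖x - y‖ ^ 2 := by
    rw [hup, hvq, norm_sub_sq_real, norm_smul, norm_smul, Real.norm_eq_abs,
      Real.norm_eq_abs, abs_of_pos hp, abs_of_pos hq, real_inner_smul_left,
      real_inner_smul_right, hxs, hys]
    linear_combination (-(p * q)) * hip
  have htarget2 : ‖u - v‖ ^ 2 ≤ (R ^ 2 / (r * s) * ‖x - y‖) ^ 2 := by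
    rw [huv, div_mul_eq_mul_div, div_pow, le_div_iff₀ (by positivity : (0:ℝ) < (r * s) ^ 2)]
    calc ((p - q) ^ 2 * s ^ 2 + p * q * ‖x - y‖ ^ 2) * (r * s) ^ 2
        = ((p - q) ^ 2 * s ^ 2 + p * q * ‖x - y‖ ^ 2) * (r ^ 2 * s ^ 2) := by ring
      _ ≤ R ^ 4 * ‖x - y‖ ^ 2 := key
      _ = (R ^ 2 * ‖x - y‖) ^ 2 := by ring
  exact le_of_pow_le_pow_left₀ (by norm_num) (by positivity) htarget2

/-- Sphere case, no ordering assumption. -/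
private lemma sphere_case (hconv : Convex ℝ K) (hcl : IsClosed K) (h0 : 0 ∈ interior K)
    {r R s p q : ℝ} {x y u v : E}
    (hr0 : 0 < r)
    (hrmin : ∀ w ∈ frontier K, r ≤ ‖w‖)
    (hRmax : ∀ w ∈ frontier K, ‖w‖ ≤ R)
    (hxs : ‖x‖ = s) (hys : ‖y‖ = s) (hrs : r ≤ s)
    (hu : u ∈ frontier K) (hv : v ∈ frontier K)
    (hup : u = p • x) (hvq : v = q • y) (hp : 0 < p) (hq : 0 < q) :
    ‖u - v‖ ≤ R ^ 2 / (r * s) * ‖x - y‖ := by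
  rcases le_total q p with h | h
  · exact sphere_aux hconv hcl h0 hr0 hrmin hRmax hxs hys hrs hu hv hup hvq hp hq h
  · have := sphere_aux hconv hcl h0 hr0 hrmin hRmax hys hxs hrs hv hu hvq hup hq hp h
    rwa [norm_sub_rev v u, norm_sub_rev y x] at this

end Sphere

private lemma contract_ineq {c X Y ip : ℝ} (hc0 : 0 < c) (hc1 : c ≤ 1)
    (hcX : c * X = Y) (hCS : ip ≤ X * Y) :
    (c * X) ^ 2 - 2 * (c * ip) + Y ^ 2 ≤ X ^ 2 - 2 * ip + Y ^ 2 := by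
  have hXY : X * Y = c * X ^ 2 := by rw [← hcX]; ring
  have h1 := mul_le_mul_of_nonneg_left hCS (by linarith : (0:ℝ) ≤ 2 * (1 - c))
  rw [hXY] at h1
  have h2 := sq_nonneg ((1 - c) * X)
  ring_nf at h1 h2 ⊢
  linarith

/-- The radial projection of a convex body `K` (with `0` in its interior, inradius `r`
and circumradius `R` with respect to the origin) onto its boundary is `(R/r)²`-Lipschitz
on `K ∖ {|x| < r}`. -/
theorem radial_projection_lipschitz (n : ℕ)
    (K : Set (EuclideanSpace ℝ (Fin n)))
    (hconv : Convex ℝ K) (hcomp : IsCompact K) (h0 : 0 ∈ interior K)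
    (r R : ℝ) (hr0 : 0 < r)
    (hrmin : ∀ x ∈ frontier K, r ≤ ‖x‖)
    (hRmax : ∀ x ∈ frontier K, ‖x‖ ≤ R)
    (ρ : EuclideanSpace ℝ (Fin n) → EuclideanSpace ℝ (Fin n))
    (hρ : ∀ x ∈ K, r ≤ ‖x‖ → ρ x ∈ frontier K ∧ ∃ t : ℝ, 0 < t ∧ ρ x = t • x) :
    ∀ x ∈ K, ∀ y ∈ K, r ≤ ‖x‖ → r ≤ ‖y‖ →
      dist (ρ x) (ρ y) ≤ (R / r) ^ 2 * dist x y := by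
  have hcl : IsClosed K := hcomp.isClosed
  have h0K : (0 : EuclideanSpace ℝ (Fin n)) ∈ K := interior_subset h0
  -- auxiliary: the case ‖y‖ ≤ ‖x‖
  have aux : ∀ x ∈ K, ∀ y ∈ K, r ≤ ‖x‖ → r ≤ ‖y‖ → ‖y‖ ≤ ‖x‖ →
      dist (ρ x) (ρ y) ≤ (R / r) ^ 2 * dist x y := by
    intro x hx y hy hxr hyr hyx
    have hx0 : 0 < ‖x‖ := lt_of_lt_of_le hr0 hxr
    have hy0 : 0 < ‖y‖ := lt_of_lt_of_le hr0 hyr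
    set c := ‖y‖ / ‖x‖ with hc
    have hc0 : 0 < c := by positivity
    have hc1 : c ≤ 1 := (div_le_one hx0).mpr hyx
    set x' := c • x with hx'def
    have hx'K : x' ∈ K := by
      have := hconv hx h0K hc0.le (by linarith : (0:ℝ) ≤ 1 - c) (by ring)
      simpa [hx'def] using this
    have hx'n : ‖x'‖ = ‖y‖ := by
      rw [hx'def, norm_smul, Real.norm_eq_abs, abs_of_pos hc0, hc,
        div_mul_cancel₀ _ (ne_of_gt hx0)]
    obtain ⟨hfx', t', ht'0, hxt'⟩ := hρ x' hx'K (by rw [hx'n]; exact hyr)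
    obtain ⟨hfx, t, ht0, hxt⟩ := hρ x hx hxr
    obtain ⟨hfy, tq, htq0, hyt⟩ := hρ y hy hyr
    -- ρ x' = ρ x
    have hfr1 : (t' * c) • x ∈ frontier K := by
      rw [mul_smul, ← hx'def, ← hxt']
      exact hfx'
    have hfr2 : t • x ∈ frontier K := hxt ▸ hfx
    have heqt : t' * c = t := ray_unique hconv h0 (mul_pos ht'0 hc0) ht0 hfr1 hfr2
    have hρeq : ρ x' = ρ x := by
      rw [hxt', hx'def, smul_smul, heqt, hxt]
    -- contraction: ‖x' - y‖ ≤ ‖x - y‖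
    have hcontract : ‖x' - y‖ ≤ ‖x - y‖ := by
      have hCS : ⟪x, y⟫ ≤ ‖x‖ * ‖y‖ := real_inner_le_norm x y
      have hcX : c * ‖x‖ = ‖y‖ := by
        rw [hc, div_mul_cancel₀ _ (ne_of_gt hx0)]
      have hsq : ‖x' - y‖ ^ 2 ≤ ‖x - y‖ ^ 2 := by
        rw [hx'def, norm_sub_sq_real, norm_sub_sq_real, norm_smul, Real.norm_eq_abs,
          abs_of_pos hc0, real_inner_smul_left]
        exact contract_ineq hc0 hc1 hcX hCS
      exact le_of_pow_le_pow_left₀ (by norm_num) (norm_nonneg _) hsq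
    -- apply the sphere case to x', y
    have hsphere := sphere_case hconv hcl h0 hr0 hrmin hRmax hx'n rfl hyr hfx' hfy hxt' hyt
      ht'0 htq0
    have hstep : dist (ρ x) (ρ y) ≤ R ^ 2 / (r * ‖y‖) * ‖x - y‖ := by
      rw [dist_eq_norm, ← hρeq]
      calc ‖ρ x' - ρ y‖ ≤ R ^ 2 / (r * ‖y‖) * ‖x' - y‖ := hsphere
        _ ≤ R ^ 2 / (r * ‖y‖) * ‖x - y‖ := by
            apply mul_le_mul_of_nonneg_left hcontract (by positivity)
    have hconst : R ^ 2 / (r * ‖y‖) ≤ (R / r) ^ 2 := by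
      rw [div_pow]
      apply div_le_div_of_nonneg_left (by positivity) (by positivity)
      calc r ^ 2 = r * r := by ring
        _ ≤ r * ‖y‖ := mul_le_mul_of_nonneg_left hyr hr0.le
    calc dist (ρ x) (ρ y) ≤ R ^ 2 / (r * ‖y‖) * ‖x - y‖ := hstep
      _ ≤ (R / r) ^ 2 * ‖x - y‖ := by
          apply mul_le_mul_of_nonneg_right hconst (norm_nonneg _)
      _ = (R / r) ^ 2 * dist x y := by rw [dist_eq_norm]
  intro x hx y hy hxr hyr
  rcases le_total ‖y‖ ‖x‖ with h | h
  · exact aux x hx y hy hxr hyr h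
  · have := aux y hy x hx hyr hxr h
    rwa [dist_comm (ρ y) (ρ x), dist_comm y x] at this
end

section
/- Let Y be a metric space admitting a conical bicombing σ and let f : Sⁿ → Y be 1-Lipschitz. Fix p ∈ Y and set R = sup_{x∈Sⁿ} d(p, f(x)). Define F : B^{n+1} → Y by F(0) = p and F(x) = σ(p, f(x/|x|), |x|) for x ≠ 0. Then F is √(1+R²)-Lipschitz. -/
open Metric Set

/-- Conical extension: if `σ` is a conical bicombing on `Y`, `f : Sⁿ → Y` is 1-Lipschitz,
`p ∈ Y` and `R = sup_{x ∈ Sⁿ} d(p, f x)`, then the conical extension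
`F(x) = σ(p, f(x/|x|), |x|)`, `F(0) = p`, is `√(1+R²)`-Lipschitz on the unit ball. -/
theorem conical_extension_lipschitz (n : ℕ)
    {Y : Type*} [MetricSpace Y]
    (σ : Y → Y → ℝ → Y)
    (hσ0 : ∀ a b, σ a b 0 = a) (hσ1 : ∀ a b, σ a b 1 = b)
    (hgeo : ∀ a b, ∀ s ∈ Set.Icc (0 : ℝ) 1, ∀ t ∈ Set.Icc (0 : ℝ) 1,
      dist (σ a b s) (σ a b t) = |s - t| * dist a b)
    (hcon : ∀ a b a' b', ∀ t ∈ Set.Icc (0 : ℝ) 1,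
      dist (σ a b t) (σ a' b' t) ≤ (1 - t) * dist a a' + t * dist b b')
    (f : EuclideanSpace ℝ (Fin (n + 1)) → Y)
    (hf : ∀ u ∈ sphere (0 : EuclideanSpace ℝ (Fin (n + 1))) 1,
      ∀ v ∈ sphere (0 : EuclideanSpace ℝ (Fin (n + 1))) 1,
        dist (f u) (f v) ≤ dist u v)
    (p : Y) (R : ℝ)
    (hR : R = ⨆ x : sphere (0 : EuclideanSpace ℝ (Fin (n + 1))) 1, dist p (f x))
    (F : EuclideanSpace ℝ (Fin (n + 1)) → Y)
    (hF0 : F 0 = p)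
    (hFx : ∀ x : EuclideanSpace ℝ (Fin (n + 1)), x ≠ 0 → ‖x‖ ≤ 1 →
      F x = σ p (f (‖x‖⁻¹ • x)) ‖x‖) :
    ∀ x ∈ closedBall (0 : EuclideanSpace ℝ (Fin (n + 1))) 1,
      ∀ y ∈ closedBall (0 : EuclideanSpace ℝ (Fin (n + 1))) 1,
        dist (F x) (F y) ≤ Real.sqrt (1 + R ^ 2) * dist x y := by
  -- the sphere is nonempty
  obtain ⟨v₀, hv₀⟩ : (sphere (0 : EuclideanSpace ℝ (Fin (n + 1))) 1).Nonempty :=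
    NormedSpace.sphere_nonempty.mpr zero_le_one
  -- the sup defining R is over a bounded set
  have hbdd : BddAbove
      (range fun x : sphere (0 : EuclideanSpace ℝ (Fin (n + 1))) 1 => dist p (f x)) := by
    refine ⟨dist p (f v₀) + 2, ?_⟩
    rintro r ⟨⟨u, hu⟩, rfl⟩
    have h1 : dist v₀ u ≤ 2 := by
      have := dist_triangle v₀ 0 u
      rw [mem_sphere_zero_iff_norm] at hu hv₀
      rw [dist_zero_right, dist_zero_left, hu, hv₀] at this
      linarith
    have h2 := hf v₀ hv₀ u hu
    calc dist p (f u) ≤ dist p (f v₀) + dist (f v₀) (f u) := dist_triangle _ _ _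
      _ ≤ dist p (f v₀) + 2 := by linarith
  have hle : ∀ u ∈ sphere (0 : EuclideanSpace ℝ (Fin (n + 1))) 1, dist p (f u) ≤ R := by
    intro u hu
    rw [hR]
    exact le_ciSup hbdd (⟨u, hu⟩ : sphere (0 : EuclideanSpace ℝ (Fin (n + 1))) 1)
  have hR0 : 0 ≤ R := dist_nonneg.trans (hle v₀ hv₀)
  have hsq : (0:ℝ) ≤ 1 + R ^ 2 := by positivity
  have hRle : R ≤ Real.sqrt (1 + R ^ 2) :=
    calc R = Real.sqrt (R ^ 2) := (Real.sqrt_sq hR0).symm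
      _ ≤ Real.sqrt (1 + R ^ 2) := Real.sqrt_le_sqrt (by linarith)
  -- distance from F x to p
  have key0 : ∀ x : EuclideanSpace ℝ (Fin (n + 1)), x ≠ 0 → ‖x‖ ≤ 1 →
      dist (F x) p ≤ Real.sqrt (1 + R ^ 2) * ‖x‖ := by
    intro x hx hx1
    have hxn : (0:ℝ) < ‖x‖ := norm_pos_iff.mpr hx
    have hu : ‖x‖⁻¹ • x ∈ sphere (0 : EuclideanSpace ℝ (Fin (n + 1))) 1 := by
      rw [mem_sphere_zero_iff_norm, norm_smul, norm_inv, norm_norm,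
        inv_mul_cancel₀ hxn.ne']
    rw [hFx x hx hx1]
    calc dist (σ p (f (‖x‖⁻¹ • x)) ‖x‖) p
        = dist (σ p (f (‖x‖⁻¹ • x)) ‖x‖) (σ p (f (‖x‖⁻¹ • x)) 0) := by rw [hσ0]
      _ = |‖x‖ - 0| * dist p (f (‖x‖⁻¹ • x)) :=
          hgeo _ _ _ ⟨hxn.le, hx1⟩ _ ⟨le_refl _, zero_le_one⟩
      _ ≤ ‖x‖ * R := by
          rw [sub_zero, abs_of_nonneg hxn.le]
          exact mul_le_mul_of_nonneg_left (hle _ hu) hxn.le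
      _ ≤ Real.sqrt (1 + R ^ 2) * ‖x‖ := by
          rw [mul_comm (Real.sqrt (1 + R ^ 2))]
          exact mul_le_mul_of_nonneg_left hRle hxn.le
  -- main case: both nonzero, wlog ‖y‖ ≤ ‖x‖
  have key : ∀ x y : EuclideanSpace ℝ (Fin (n + 1)), x ≠ 0 → y ≠ 0 →
      ‖x‖ ≤ 1 → ‖y‖ ≤ 1 → ‖y‖ ≤ ‖x‖ →
      dist (F x) (F y) ≤ Real.sqrt (1 + R ^ 2) * dist x y := by
    intro x y hx hy hx1 hy1 hba
    have hxn : (0:ℝ) < ‖x‖ := norm_pos_iff.mpr hx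
    have hyn : (0:ℝ) < ‖y‖ := norm_pos_iff.mpr hy
    set a := ‖x‖ with ha
    set b := ‖y‖ with hb
    set u := a⁻¹ • x with hu'
    set v := b⁻¹ • y with hv'
    have hun : ‖u‖ = 1 := by
      rw [hu', norm_smul, norm_inv, ha, norm_norm, inv_mul_cancel₀ hxn.ne']
    have hvn : ‖v‖ = 1 := by
      rw [hv', norm_smul, norm_inv, hb, norm_norm, inv_mul_cancel₀ hyn.ne']
    have hus : u ∈ sphere (0 : EuclideanSpace ℝ (Fin (n + 1))) 1 := by
      rwa [mem_sphere_zero_iff_norm]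
    have hvs : v ∈ sphere (0 : EuclideanSpace ℝ (Fin (n + 1))) 1 := by
      rwa [mem_sphere_zero_iff_norm]
    have hxu : x = a • u := by
      rw [hu', smul_smul, mul_inv_cancel₀ hxn.ne', one_smul]
    have hyv : y = b • v := by
      rw [hv', smul_smul, mul_inv_cancel₀ hyn.ne', one_smul]
    set d : ℝ := ‖u - v‖ with hd
    have hd0 : 0 ≤ d := norm_nonneg _
    -- key identity: ‖x - y‖² = (a-b)² + a·b·d²
    have hident : ‖x - y‖ ^ 2 = (a - b) ^ 2 + a * b * d ^ 2 := by
      have e1 : ‖x - y‖ ^ 2 = a^2*‖u‖^2 - 2*(a*b*(inner ℝ u v : ℝ)) + b^2*‖v‖^2 := by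
        rw [hxu, hyv, @norm_sub_sq_real, real_inner_smul_left, real_inner_smul_right]
        simp only [norm_smul, Real.norm_eq_abs, mul_pow, sq_abs]
        ring
      have e2 : d ^ 2 = ‖u‖^2 - 2*(inner ℝ u v : ℝ) + ‖v‖^2 := by
        rw [hd, @norm_sub_sq_real]; try ring
      rw [hun, hvn] at e1 e2
      rw [e1]
      linear_combination (-(a*b)) * e2
    -- first estimate
    have step1 : dist (F x) (F y) ≤ (a - b) * R + b * d := by
      rw [hFx x hx hx1, hFx y hy hy1, ← ha, ← hb, ← hu', ← hv']
      calc dist (σ p (f u) a) (σ p (f v) b)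
          ≤ dist (σ p (f u) a) (σ p (f u) b) + dist (σ p (f u) b) (σ p (f v) b) :=
            dist_triangle _ _ _
        _ ≤ (a - b) * R + b * d := by
            have h1 : dist (σ p (f u) a) (σ p (f u) b) = |a - b| * dist p (f u) :=
              hgeo _ _ _ ⟨hxn.le, hx1⟩ _ ⟨hyn.le, hy1⟩
            have h2 : dist (σ p (f u) b) (σ p (f v) b)
                ≤ (1 - b) * dist p p + b * dist (f u) (f v) :=
              hcon _ _ _ _ _ ⟨hyn.le, hy1⟩
            rw [dist_self, mul_zero, zero_add] at h2
            have h3 : dist (f u) (f v) ≤ d := by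
              have := hf u hus v hvs
              rwa [dist_eq_norm] at this
            have h4 : |a - b| * dist p (f u) ≤ (a - b) * R := by
              rw [abs_of_nonneg (by linarith)]
              exact mul_le_mul (le_refl _) (hle u hus) dist_nonneg (by linarith)
            have h5 : b * dist (f u) (f v) ≤ b * d :=
              mul_le_mul_of_nonneg_left h3 hyn.le
            linarith
    -- Cauchy–Schwarz estimate
    have step2 : (a - b) * R + b * d ≤ Real.sqrt (1 + R ^ 2) * dist x y := by
      rw [dist_eq_norm]
      have hab : (0:ℝ) ≤ a - b := by linarith
      have hnn : (0:ℝ) ≤ ‖x - y‖ := norm_nonneg _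
      have hlhs : (0:ℝ) ≤ (a - b) * R + b * d :=
        add_nonneg (mul_nonneg hab hR0) (mul_nonneg hyn.le hd0)
      have hrhs : Real.sqrt (1 + R ^ 2) * ‖x - y‖
          = Real.sqrt ((1 + R ^ 2) * ‖x - y‖ ^ 2) := by
        rw [Real.sqrt_mul hsq, Real.sqrt_sq hnn]
      rw [hrhs]
      apply (Real.le_sqrt hlhs (by positivity)).mpr
      rw [hident]
      nlinarith [sq_nonneg ((a - b) - R * b * d), sq_nonneg (a - b), sq_nonneg d,
        mul_nonneg (mul_nonneg hab hyn.le) (sq_nonneg d),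
        mul_nonneg hyn.le hd0, mul_nonneg (mul_nonneg hab hR0) (mul_nonneg hyn.le hd0),
        mul_nonneg (sq_nonneg R) (mul_nonneg (mul_nonneg (sub_nonneg.mpr hba) hyn.le) (sq_nonneg d))]
    exact step1.trans step2
  -- assemble
  intro x hx y hy
  rw [mem_closedBall, dist_zero_right] at hx hy
  rcases eq_or_ne x 0 with rfl | hx0
  · rcases eq_or_ne y 0 with rfl | hy0
    · simp
    · rw [hF0, dist_comm, dist_comm (0 : EuclideanSpace ℝ (Fin (n + 1))) y, dist_zero_right]
      exact key0 y hy0 hy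
  · rcases eq_or_ne y 0 with rfl | hy0
    · rw [hF0, dist_zero_right]
      exact key0 x hx0 hx
    · rcases le_total ‖y‖ ‖x‖ with h | h
      · exact key x y hx0 hy0 hx hy h
      · rw [dist_comm, dist_comm x y]
        exact key y x hy0 hx0 hy hx h
end

section
/- Let X be a metric space satisfying Nagata(n, c): for every s > 0 there is a covering of X with s-multiplicity at most n+1 (every subset of diameter < s meets at most n+1 members) whose members have diameter at most c·s. Then for every s > 0, X admits a covering ℬ such that every member has diameter at most 2(c+1)(n+2)·s, and ℬ decomposes as ℬ₁ ∪ ⋯ ∪ ℬ_{n+1} where for each k and any two distinct members B, B' ∈ ℬ_k one has d(B, B') > s. -/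
open Metric Set

/-- The degenerate case: if `X` embeds into `Fin (n+1)`, we can take the fibers of the
embedding as the covering, colored injectively. -/
theorem colored_covering_small {X : Type*} [MetricSpace X] (n : ℕ) (d s : ℝ)
    (e : X ↪ Fin (n + 1)) :
    ∃ (ι : Type) (B : ι → Set X) (color : ι → Fin (n + 1)),
      (⋃ i, B i) = Set.univ ∧
      (∀ i, EMetric.diam (B i) ≤ ENNReal.ofReal d) ∧
      ∀ i j : ι, i ≠ j → color i = color j →
        ∃ s' : ℝ, s < s' ∧ ∀ x ∈ B i, ∀ y ∈ B j, s' ≤ dist x y := by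
  refine ⟨Fin (n + 1), fun i => {x | e x = i}, id, ?_, ?_, ?_⟩
  · ext x
    simp only [Set.mem_iUnion, Set.mem_setOf_eq, Set.mem_univ, iff_true]
    exact ⟨e x, rfl⟩
  · intro i
    have hsub : ({x | e x = i} : Set X).Subsingleton := fun a ha b hb =>
      e.injective (ha.trans hb.symm)
    refine (EMetric.diam_eq_zero_iff.mpr hsub).trans_le ?_
    exact zero_le
  · intro i j hij hcolor
    exact absurd hcolor hij

/-- If the Nagata condition holds with `c < 0`, then `X` has at most `n+1` points. -/
theorem nagata_emb_of_neg {X : Type*} [MetricSpace X] (n : ℕ) (c : ℝ) (hc : c < 0)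
    (hNagata : ∀ s : ℝ, 0 < s → ∃ (ι : Type) (B : ι → Set X),
      (⋃ i, B i) = Set.univ ∧
      (∀ i, EMetric.diam (B i) ≤ ENNReal.ofReal (c * s)) ∧
      ∀ E : Set X, EMetric.diam E < ENNReal.ofReal s →
        ∀ S : Finset ι, (∀ i ∈ S, (E ∩ B i).Nonempty) → S.card ≤ n + 1) :
    Nonempty (X ↪ Fin (n + 1)) := by
  classical
  have hcard : ∀ F : Finset X, F.card ≤ n + 1 := by
    intro F
    set D : ℝ := (EMetric.diam (↑F : Set X)).toReal with hD
    have hDnn : 0 ≤ D := ENNReal.toReal_nonneg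
    have hT : 0 < D + 1 := by linarith
    obtain ⟨ι₀, A, hcov, hdiam, hmult⟩ := hNagata (D + 1) hT
    have hsub : ∀ i, (A i).Subsingleton := by
      intro i
      have h := hdiam i
      rw [ENNReal.ofReal_eq_zero.mpr (by nlinarith : c * (D + 1) ≤ 0)] at h
      exact EMetric.diam_eq_zero_iff.mp (le_antisymm h zero_le)
    have hg : ∀ x : X, ∃ i, x ∈ A i := by
      intro x
      have hx : x ∈ ⋃ i, A i := by rw [hcov]; trivial
      exact Set.mem_iUnion.mp hx
    choose g hgmem using hg
    have hginj : Function.Injective g := by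
      intro x y hxy
      exact hsub (g x) (hgmem x) (by rw [hxy]; exact hgmem y)
    have hFdiam : EMetric.diam (↑F : Set X) < ENNReal.ofReal (D + 1) := by
      have hne : EMetric.diam (↑F : Set X) ≠ ⊤ :=
        (Set.Finite.isBounded F.finite_toSet).ediam_ne_top
      rw [ENNReal.lt_ofReal_iff_toReal_lt hne]
      linarith
    have hm := hmult (↑F) hFdiam (F.image g) (by
      intro i hi
      obtain ⟨x, hxF, rfl⟩ := Finset.mem_image.mp hi
      exact ⟨x, hxF, hgmem x⟩)
    rwa [Finset.card_image_of_injective _ hginj] at hm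
  have hfin : Finite X := by
    by_contra h
    rw [not_finite_iff_infinite] at h
    obtain ⟨F, hF⟩ := Infinite.exists_subset_card_eq X (n + 2)
    have := hcard F
    omega
  haveI := Fintype.ofFinite X
  have hle : Fintype.card X ≤ Fintype.card (Fin (n + 1)) := by
    rw [Fintype.card_fin]
    simpa [Finset.card_univ] using hcard Finset.univ
  exact Function.Embedding.nonempty_of_card_le hle

/-- Colored coverings from the Nagata condition: if `X` satisfies `Nagata(n, c)`, then for
every `s > 0` there is a covering of `X` by sets of diameter at most `2(c+1)(n+2)·s`
which splits into `n+1` color classes, any two distinct members of the same color being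
at distance greater than `s`. -/
theorem colored_covering_of_nagata {X : Type*} [MetricSpace X] (n : ℕ) (c : ℝ)
    (hNagata : ∀ s : ℝ, 0 < s → ∃ (ι : Type) (B : ι → Set X),
      (⋃ i, B i) = Set.univ ∧
      (∀ i, EMetric.diam (B i) ≤ ENNReal.ofReal (c * s)) ∧
      ∀ E : Set X, EMetric.diam E < ENNReal.ofReal s →
        ∀ S : Finset ι, (∀ i ∈ S, (E ∩ B i).Nonempty) → S.card ≤ n + 1) :
    ∀ s : ℝ, 0 < s → ∃ (ι : Type) (B : ι → Set X) (color : ι → Fin (n + 1)),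
      (⋃ i, B i) = Set.univ ∧
      (∀ i, EMetric.diam (B i) ≤ ENNReal.ofReal (2 * (c + 1) * (n + 2) * s)) ∧
      ∀ i j : ι, i ≠ j → color i = color j →
        ∃ s' : ℝ, s < s' ∧ ∀ x ∈ B i, ∀ y ∈ B j, s' ≤ dist x y := by
  intro s hs
  classical
  by_cases hcneg : c < 0
  · exact colored_covering_small n _ s (nagata_emb_of_neg n c hcneg hNagata).some
  push_neg at hcneg
  obtain ⟨ι₀, A, hcov, hdiam, hmult⟩ := hNagata (2 * ((n : ℝ) + 2) * s) (by positivity)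
  set σ : ℝ := s * (2 * (n : ℝ) + 3) / (2 * (n : ℝ) + 2) with hσdef
  have hden : (0:ℝ) < 2 * (n : ℝ) + 2 := by positivity
  have hσmul : σ * (2 * (n : ℝ) + 2) = s * (2 * (n : ℝ) + 3) := by
    rw [hσdef, div_mul_cancel₀]
    exact hden.ne'
  have hσpos : 0 < σ := by rw [hσdef]; positivity
  have hnσpos : 0 ≤ (n : ℝ) * σ := mul_nonneg (Nat.cast_nonneg n) hσpos.le
  have hn1σpos : 0 < ((n : ℝ) + 1) * σ :=
    mul_pos (by positivity) hσpos
  have hsσ : s < σ := by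
    rw [← mul_lt_mul_iff_left₀ hden]
    nlinarith [hσmul, hs]
  have hnσ : (n : ℝ) * σ ≤ ((n : ℝ) + 3 / 2) * s := by
    rw [← mul_le_mul_iff_left₀ hden]
    have h := congrArg (fun r => (n : ℝ) * r) hσmul
    nlinarith [h, mul_nonneg (Nat.cast_nonneg n : (0:ℝ) ≤ n) hs.le, hs.le]
  have hn1σ : 2 * (((n : ℝ) + 1) * σ) = (2 * (n : ℝ) + 3) * s := by
    linear_combination hσmul
  set S : X → ℕ → Set ι₀ :=
    fun x k => {l | EMetric.infEdist x (A l) ≤ ENNReal.ofReal ((k : ℝ) * σ)} with hSdef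
  have hSmono : ∀ (x : X) {k k' : ℕ}, k ≤ k' → S x k ⊆ S x k' := by
    intro x k k' hkk' l hl
    simp only [hSdef, Set.mem_setOf_eq] at hl ⊢
    refine le_trans hl (ENNReal.ofReal_le_ofReal ?_)
    have hcast : (k : ℝ) ≤ (k' : ℝ) := Nat.cast_le.mpr hkk'
    nlinarith [hσpos.le]
  have hS0 : ∀ x : X, (S x 0).Nonempty := by
    intro x
    have hx : x ∈ ⋃ i, A i := by rw [hcov]; trivial
    obtain ⟨l, hl⟩ := Set.mem_iUnion.mp hx
    refine ⟨l, ?_⟩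
    simp [hSdef]
    exact EMetric.infEdist_zero_of_mem hl
  have hcard : ∀ (x : X) (F : Finset ι₀), (↑F : Set ι₀) ⊆ S x (n + 1) → F.card ≤ n + 1 := by
    intro x F hF
    have hy : ∀ l ∈ F, ∃ y, y ∈ A l ∧ edist x y < ENNReal.ofReal (((n : ℝ) + 1) * σ + s / 4) := by
      intro l hl
      have h0 := hF hl
      simp only [hSdef, Set.mem_setOf_eq] at h0
      have h1 : EMetric.infEdist x (A l) < ENNReal.ofReal (((n : ℝ) + 1) * σ + s / 4) := by
        refine lt_of_le_of_lt h0 ?_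
        rw [ENNReal.ofReal_lt_ofReal_iff (by linarith [hn1σpos, hs])]
        push_cast
        linarith
      exact EMetric.infEdist_lt_iff.mp h1
    choose y hyA hyd using hy
    set E : Set X := {z | ∃ l, ∃ hl : l ∈ F, z = y l hl} with hEdef
    have hEdiam : EMetric.diam E < ENNReal.ofReal (2 * ((n : ℝ) + 2) * s) := by
      have hle : EMetric.diam E ≤ ENNReal.ofReal (2 * (((n : ℝ) + 1) * σ + s / 4)) := by
        apply EMetric.diam_le
        rintro a ⟨l, hl, rfl⟩ b ⟨l', hl', rfl⟩
        calc edist (y l hl) (y l' hl')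
            ≤ edist (y l hl) x + edist x (y l' hl') := edist_triangle _ _ _
          _ ≤ ENNReal.ofReal (((n : ℝ) + 1) * σ + s / 4)
              + ENNReal.ofReal (((n : ℝ) + 1) * σ + s / 4) := by
              refine add_le_add ?_ (hyd l' hl').le
              rw [edist_comm]
              exact (hyd l hl).le
          _ = ENNReal.ofReal (2 * (((n : ℝ) + 1) * σ + s / 4)) := by
              rw [← ENNReal.ofReal_add (by linarith [hn1σpos, hs]) (by linarith [hn1σpos, hs])]
              ring_nf
      refine lt_of_le_of_lt hle ?_
      rw [ENNReal.ofReal_lt_ofReal_iff (by positivity)]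
      linarith [hn1σ, hs]
    exact hmult E hEdiam F (fun i hi => ⟨y i hi, ⟨i, hi, rfl⟩, hyA i hi⟩)
  have hfin : ∀ x : X, (S x (n + 1)).Finite := by
    intro x
    by_contra h
    obtain ⟨F, hFsub, hFcard⟩ :=
      Set.Infinite.exists_subset_card_eq (show (S x (n + 1)).Infinite from h) (n + 2)
    have := hcard x F hFsub
    omega
  have hstab : ∀ x : X, ∃ k, k ≤ n ∧ S x k = S x (k + 1) := by
    intro x
    by_contra h
    push_neg at h
    have hgrow : ∀ k, k ≤ n + 1 → k + 1 ≤ (S x k).ncard := by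
      intro k
      induction k with
      | zero =>
        intro _
        have hf : (S x 0).Finite := (hfin x).subset (hSmono x (Nat.zero_le _))
        have := (Set.ncard_pos hf).mpr (hS0 x)
        omega
      | succ k ih =>
        intro hk
        have hk' : k ≤ n := by omega
        have hss : S x k < S x (k + 1) :=
          lt_of_le_of_ne (hSmono x (Nat.le_succ k)) (h k hk')
        have hf : (S x (k + 1)).Finite := (hfin x).subset (hSmono x (by omega))
        have h1 := Set.ncard_lt_ncard hss hf
        have h2 := ih (by omega)
        omega
    have h1 : n + 2 ≤ (S x (n + 1)).ncard := hgrow (n + 1) le_rfl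
    have h2 : (S x (n + 1)).ncard ≤ n + 1 := by
      rw [Set.ncard_eq_toFinset_card _ (hfin x)]
      exact hcard x _ (by simp)
    omega
  choose k₀ hk₀le hk₀eq using hstab
  let pickO : Set ι₀ → Option ι₀ := fun T => if h : T.Nonempty then some h.choose else none
  have pick_mem : ∀ {T : Set ι₀} {l : ι₀}, pickO T = some l → l ∈ T := by
    intro T l h
    by_cases hT : T.Nonempty
    · simp only [pickO, dif_pos hT, Option.some.injEq] at h
      exact h ▸ hT.choose_spec
    · simp only [pickO, dif_neg hT] at h
      exact nomatch h
  have pick_eq : ∀ {T : Set ι₀} (hT : T.Nonempty), pickO T = some hT.choose :=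
    fun hT => dif_pos hT
  refine ⟨Option ι₀ × Fin (n + 1),
    fun p => {x | k₀ x = p.2.val ∧ pickO (S x (k₀ x)) = p.1}, Prod.snd, ?_, ?_, ?_⟩
  · apply Set.eq_univ_of_forall
    intro x
    exact Set.mem_iUnion.mpr
      ⟨(pickO (S x (k₀ x)), ⟨k₀ x, Nat.lt_succ_of_le (hk₀le x)⟩), rfl, rfl⟩
  · rintro ⟨o, k⟩
    rcases o with _ | i
    · -- empty color class for the `none` index
      apply EMetric.diam_le
      rintro a ⟨-, hap⟩ b -
      have hne : (S a (k₀ a)).Nonempty := (hS0 a).mono (hSmono a (Nat.zero_le _))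
      rw [pick_eq hne] at hap
      simp at hap
    · apply EMetric.diam_le
      rintro a ⟨hak, hap⟩ b ⟨hbk, hbp⟩
      have key : ∀ z : X, pickO (S z (k₀ z)) = some i →
          ∃ yz, yz ∈ A i ∧ edist z yz < ENNReal.ofReal ((n : ℝ) * σ + s / 4) := by
        intro z hz
        have hzi : i ∈ S z (k₀ z) := pick_mem hz
        simp only [hSdef, Set.mem_setOf_eq] at hzi
        have h1 : EMetric.infEdist z (A i) < ENNReal.ofReal ((n : ℝ) * σ + s / 4) := by
          refine lt_of_le_of_lt hzi ?_
          rw [ENNReal.ofReal_lt_ofReal_iff (by linarith [hnσpos, hs])]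
          have hzn : (k₀ z : ℝ) ≤ (n : ℝ) := Nat.cast_le.mpr (hk₀le z)
          nlinarith [hσpos.le, hs]
        exact EMetric.infEdist_lt_iff.mp h1
      obtain ⟨ya, hyaA, hya⟩ := key a hap
      obtain ⟨yb, hybA, hyb⟩ := key b hbp
      have hct : (0:ℝ) ≤ c * (2 * ((n : ℝ) + 2) * s) := mul_nonneg hcneg (by positivity)
      calc edist a b ≤ edist a ya + edist ya yb + edist yb b := edist_triangle4 _ _ _ _
        _ ≤ ENNReal.ofReal ((n : ℝ) * σ + s / 4) + ENNReal.ofReal (c * (2 * ((n : ℝ) + 2) * s))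
            + ENNReal.ofReal ((n : ℝ) * σ + s / 4) := by
            refine add_le_add (add_le_add hya.le ?_) ?_
            · exact le_trans (EMetric.edist_le_diam_of_mem hyaA hybA) (hdiam i)
            · rw [edist_comm]
              exact hyb.le
        _ ≤ ENNReal.ofReal (2 * (c + 1) * ((n : ℝ) + 2) * s) := by
            rw [← ENNReal.ofReal_add (by linarith [hnσpos, hs.le]) hct,
              ← ENNReal.ofReal_add (by linarith [hnσpos, hs.le, hct]) (by linarith [hnσpos, hs.le])]
            apply ENNReal.ofReal_le_ofReal
            linarith [hnσ, hs.le]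
  · rintro ⟨o, k⟩ ⟨o', k'⟩ hne hcol
    refine ⟨σ, hsσ, ?_⟩
    rintro x ⟨hxk, hxp⟩ y ⟨hyk, hyp⟩
    by_contra hlt
    push_neg at hlt
    have hkxy : k₀ x = k₀ y := by rw [hxk, hyk, hcol]
    have step : ∀ u v : X, dist u v < σ → k₀ u = k₀ v → S v (k₀ v) ⊆ S u (k₀ u) := by
      intro u v huv hkuv l hl
      simp only [hSdef, Set.mem_setOf_eq] at hl
      have h1 : EMetric.infEdist u (A l) ≤ ENNReal.ofReal (((k₀ u : ℝ) + 1) * σ) := by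
        calc EMetric.infEdist u (A l) ≤ edist u v + EMetric.infEdist v (A l) :=
              EMetric.infEdist_le_edist_add_infEdist
          _ ≤ ENNReal.ofReal (dist u v) + ENNReal.ofReal ((k₀ v : ℝ) * σ) :=
              add_le_add (le_of_eq (edist_dist u v)) hl
          _ ≤ ENNReal.ofReal (((k₀ u : ℝ) + 1) * σ) := by
              rw [← ENNReal.ofReal_add dist_nonneg (mul_nonneg (Nat.cast_nonneg _) hσpos.le)]
              refine ENNReal.ofReal_le_ofReal ?_
              rw [hkuv]
              nlinarith [huv.le]
      have h2 : l ∈ S u (k₀ u + 1) := by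
        simp only [hSdef, Set.mem_setOf_eq]
        refine le_trans h1 (ENNReal.ofReal_le_ofReal ?_)
        push_cast
        exact le_rfl
      rw [hk₀eq u]
      exact h2
    have hSeq : S x (k₀ x) = S y (k₀ y) := by
      refine Set.Subset.antisymm ?_ ?_
      · exact step y x (by rw [dist_comm]; exact hlt) hkxy.symm
      · exact step x y hlt hkxy
    have hoo' : ((o, k).1 : Option ι₀) = (o', k').1 := by
      rw [← hxp, ← hyp, hSeq]
    exact hne (Prod.ext hoo' hcol)
end

section
/- Let Σ be a connected, pure n-dimensional simplicial complex (n ≥ 2) in Σ(I) = {x ∈ ℓ₂(I) : x_i ≥ 0, Σx_i = 1}, equipped with the ℓ₂-metric, with at most N n-simplices. Then Σ is N^{10·log(n)}-quasiconvex: any two points of Σ can be joined by a path in Σ of length at most N^{10·log(n)} times their ℓ₂-distance. -/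
set_option linter.unusedSectionVars false
set_option maxHeartbeats 1000000

open Set
open scoped ENNReal NNReal

namespace SCQC

section Paths

variable {E : Type*} [NormedAddCommGroup E] [NormedSpace ℝ E]


/-- Existence of a path from `x` to `y` inside `S` of variation at most `C`. -/
def QCPath (S : Set E) (x y : E) (C : ℝ) : Prop :=
  ∃ γ : ℝ → E, ContinuousOn γ (Set.Icc 0 1) ∧ γ 0 = x ∧ γ 1 = y ∧
    (∀ t ∈ Set.Icc (0:ℝ) 1, γ t ∈ S) ∧
    eVariationOn γ (Set.Icc 0 1) ≤ ENNReal.ofReal C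

theorem QCPath.mono {S : Set E} {x y : E} {C C' : ℝ} (h : QCPath S x y C) (hCC : C ≤ C') :
    QCPath S x y C' := by
  obtain ⟨γ, h1, h2, h3, h4, h5⟩ := h
  exact ⟨γ, h1, h2, h3, h4, h5.trans (ENNReal.ofReal_le_ofReal hCC)⟩

theorem qcpath_segment {S : Set E} {x y : E} (h : segment ℝ x y ⊆ S) :
    QCPath S x y ‖x - y‖ := by
  refine ⟨fun t => x + t • (y - x), ?_, by simp, ?_, ?_, ?_⟩
  · exact (continuous_const.add (continuous_id.smul continuous_const)).continuousOn
  · show x + (1:ℝ) • (y - x) = y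
    rw [one_smul]; abel
  · intro t ht
    apply h
    exact ⟨1 - t, t, by linarith [ht.2], ht.1, by linarith, by module⟩
  · have hf : LipschitzWith ‖y - x‖₊ (fun t : ℝ => x + t • (y - x)) := by
      apply LipschitzWith.of_dist_le_mul
      intro a b
      have hab : (x + a • (y - x)) - (x + b • (y - x)) = (a - b) • (y - x) := by module
      rw [dist_eq_norm, hab, norm_smul, dist_eq_norm]
      simp only [Real.norm_eq_abs]
      rw [mul_comm, coe_nnnorm]
    have h1 : eVariationOn ((fun t : ℝ => x + t • (y - x)) ∘ id) (Icc 0 1)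
        ≤ ‖y - x‖₊ * eVariationOn (id : ℝ → ℝ) (Icc 0 1) :=
      hf.lipschitzOnWith.comp_eVariationOn_le (mapsTo_univ _ _)
    have h2 : eVariationOn (id : ℝ → ℝ) (Icc 0 1) ≤ ENNReal.ofReal 1 := by
      have h3 := MonotoneOn.eVariationOn_le (f := (id : ℝ → ℝ)) (s := Icc (0:ℝ) 1)
        monotoneOn_id (a := 0) (b := 1) (by simp) (by simp)
      simpa using h3
    calc eVariationOn (fun t : ℝ => x + t • (y - x)) (Icc 0 1)
        = eVariationOn ((fun t : ℝ => x + t • (y - x)) ∘ id) (Icc 0 1) := rfl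
      _ ≤ ‖y - x‖₊ * eVariationOn (id : ℝ → ℝ) (Icc 0 1) := h1
      _ ≤ ‖y - x‖₊ * ENNReal.ofReal 1 := mul_le_mul_right h2 _
      _ = ENNReal.ofReal ‖x - y‖ := by
          rw [ENNReal.ofReal_one, mul_one, ← enorm_eq_nnnorm, ← ofReal_norm, norm_sub_rev]



theorem QCPath.trans {S : Set E} {x z y : E} {C₁ C₂ : ℝ} (h₁ : QCPath S x z C₁)
    (h₂ : QCPath S z y C₂) (hC₁ : 0 ≤ C₁) (hC₂ : 0 ≤ C₂) : QCPath S x y (C₁ + C₂) := by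
  obtain ⟨γ₁, g1c, g10, g11, g1m, g1v⟩ := h₁
  obtain ⟨γ₂, g2c, g20, g21, g2m, g2v⟩ := h₂
  set γ : ℝ → E := fun u => if u ≤ 2⁻¹ then γ₁ (2*u) else γ₂ (2*u - 1) with hγ
  have e₁ : EqOn γ (γ₁ ∘ fun u : ℝ => 2*u) (Icc 0 2⁻¹) := fun u hu => if_pos hu.2
  have e₂ : EqOn γ (γ₂ ∘ fun u : ℝ => 2*u - 1) (Icc 2⁻¹ 1) := by
    intro u hu
    by_cases h : u ≤ 2⁻¹
    · have hu2 : u = 2⁻¹ := le_antisymm h hu.1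
      subst hu2
      show (if (2⁻¹:ℝ) ≤ 2⁻¹ then γ₁ (2 * 2⁻¹) else γ₂ (2 * 2⁻¹ - 1)) = γ₂ (2 * 2⁻¹ - 1)
      rw [if_pos le_rfl]
      norm_num [g11, g20]
    · exact if_neg h
  have c₁ : ContinuousOn γ (Icc 0 2⁻¹) := by
    refine ContinuousOn.congr ?_ e₁
    refine g1c.comp (continuous_const.mul continuous_id).continuousOn ?_
    intro u hu
    simp only [mem_Icc] at hu ⊢
    constructor <;> linarith [hu.1, hu.2]
  have c₂ : ContinuousOn γ (Icc 2⁻¹ 1) := by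
    refine ContinuousOn.congr ?_ e₂
    refine g2c.comp ((continuous_const.mul continuous_id).sub continuous_const).continuousOn ?_
    intro u hu
    simp only [mem_Icc] at hu ⊢
    constructor <;> linarith [hu.1, hu.2]
  have hsub : Icc (0:ℝ) 1 ⊆ Icc 0 2⁻¹ ∪ Icc 2⁻¹ 1 := by
    intro u hu
    by_cases h : u ≤ 2⁻¹
    · exact Or.inl ⟨hu.1, h⟩
    · exact Or.inr ⟨le_of_not_ge h, hu.2⟩
  have hcont : ContinuousOn γ (Icc 0 1) := by
    intro t ht
    have hA : ContinuousWithinAt γ (Icc 0 2⁻¹) t := by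
      by_cases h2 : t ∈ Icc (0:ℝ) 2⁻¹
      · exact c₁ t h2
      · exact continuousWithinAt_of_notMem_closure (by rwa [isClosed_Icc.closure_eq])
    have hB : ContinuousWithinAt γ (Icc 2⁻¹ 1) t := by
      by_cases h2 : t ∈ Icc (2⁻¹:ℝ) 1
      · exact c₂ t h2
      · exact continuousWithinAt_of_notMem_closure (by rwa [isClosed_Icc.closure_eq])
    exact (hA.union hB).mono hsub
  have i1 : Icc (0:ℝ) 1 ∩ Icc 0 2⁻¹ = Icc 0 2⁻¹ :=
    inter_eq_right.mpr (Icc_subset_Icc le_rfl (by norm_num))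
  have i2 : Icc (0:ℝ) 1 ∩ Icc 2⁻¹ 1 = Icc 2⁻¹ 1 :=
    inter_eq_right.mpr (Icc_subset_Icc (by norm_num) le_rfl)
  have key := eVariationOn.Icc_add_Icc γ (s := Icc (0:ℝ) 1) (a := 0) (b := 2⁻¹) (c := 1)
      (by norm_num) (by norm_num) (by constructor <;> norm_num)
  rw [i1, i2, inter_self] at key
  have im1 : (fun u : ℝ => 2*u) '' Icc 0 2⁻¹ = Icc 0 1 := by
    rw [show (fun u : ℝ => 2*u) = (2 * ·) from rfl, image_mul_left_Icc' (by norm_num)]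
    norm_num
  have im2 : (fun u : ℝ => 2*u - 1) '' Icc 2⁻¹ 1 = Icc 0 1 := by
    rw [show (fun u : ℝ => 2*u - 1) = (2 * · + (-1)) from by funext u; ring,
      image_affine_Icc' (by norm_num)]
    norm_num
  have v₁ : eVariationOn γ (Icc 0 2⁻¹) ≤ ENNReal.ofReal C₁ := by
    rw [eVariationOn.eq_of_eqOn e₁,
      eVariationOn.comp_eq_of_monotoneOn γ₁ (fun u : ℝ => 2*u)
        (fun a _ b _ hab => by dsimp; linarith), im1]
    exact g1v
  have v₂ : eVariationOn γ (Icc 2⁻¹ 1) ≤ ENNReal.ofReal C₂ := by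
    rw [eVariationOn.eq_of_eqOn e₂,
      eVariationOn.comp_eq_of_monotoneOn γ₂ (fun u : ℝ => 2*u - 1)
        (fun a _ b _ hab => by dsimp; linarith), im2]
    exact g2v
  refine ⟨γ, hcont, ?_, ?_, ?_, ?_⟩
  · show (if (0:ℝ) ≤ 2⁻¹ then γ₁ (2*0) else γ₂ (2*0-1)) = x
    rw [if_pos (by norm_num)]
    norm_num [g10]
  · show (if (1:ℝ) ≤ 2⁻¹ then γ₁ (2*1) else γ₂ (2*1-1)) = y
    rw [if_neg (by norm_num)]
    norm_num [g21]
  · intro t ht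
    by_cases h : t ≤ 2⁻¹
    · have : γ t = γ₁ (2*t) := if_pos h
      rw [this]
      exact g1m _ ⟨by linarith [ht.1], by linarith⟩
    · have : γ t = γ₂ (2*t - 1) := if_neg h
      rw [this]
      push_neg at h
      exact g2m _ ⟨by linarith, by linarith [ht.2]⟩
  · calc eVariationOn γ (Icc 0 1) = eVariationOn γ (Icc 0 2⁻¹) + eVariationOn γ (Icc 2⁻¹ 1) :=
          key.symm
      _ ≤ ENNReal.ofReal C₁ + ENNReal.ofReal C₂ := add_le_add v₁ v₂
      _ = ENNReal.ofReal (C₁ + C₂) := (ENNReal.ofReal_add hC₁ hC₂).symm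


end Paths

section Lp


variable {I : Type*} [DecidableEq I]

theorem coord_abs_le_norm (f : lp (fun _ : I => ℝ) 2) (i : I) : |f i| ≤ ‖f‖ := by
  have h := lp.norm_apply_le_norm (E := fun _ : I => ℝ) (p := 2) (by norm_num) f i
  simpa [Real.norm_eq_abs] using h

theorem norm_le_of_sq_sum {T : Finset I} {v : lp (fun _ : I => ℝ) 2}
    (hv : ∀ i ∉ T, v i = 0) {C : ℝ} (hC : 0 ≤ C) (h : ∑ i ∈ T, (v i)^2 ≤ C^2) : ‖v‖ ≤ C := by
  apply lp.norm_le_of_forall_sum_le (by norm_num) hC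
  intro s
  have hx : ∀ a : ℝ, ‖a‖ ^ (2 : ℝ≥0∞).toReal = a ^ 2 := by
    intro a
    rw [show ((2 : ℝ≥0∞)).toReal = ((2:ℕ):ℝ) by norm_num, Real.rpow_natCast,
      Real.norm_eq_abs, sq_abs]
  calc ∑ i ∈ s, ‖v i‖ ^ (2 : ℝ≥0∞).toReal = ∑ i ∈ s, (v i)^2 := by
        exact Finset.sum_congr rfl fun i _ => hx _
    _ ≤ ∑ i ∈ s ∪ T, (v i)^2 :=
        Finset.sum_le_sum_of_subset_of_nonneg Finset.subset_union_left
          (fun i _ _ => sq_nonneg _)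
    _ = ∑ i ∈ T, (v i)^2 := by
        refine (Finset.sum_subset Finset.subset_union_right fun i _ hi => ?_).symm
        rw [hv i hi]; ring
    _ ≤ C^2 := h
    _ = C ^ (2 : ℝ≥0∞).toReal := by
        rw [show ((2 : ℝ≥0∞)).toReal = ((2:ℕ):ℝ) by norm_num, Real.rpow_natCast]

theorem sq_sum_le {T : Finset I} {f : I → ℝ} (hf : ∀ i ∈ T, 0 ≤ f i) :
    ∑ i ∈ T, (f i)^2 ≤ (∑ i ∈ T, f i)^2 := by
  calc ∑ i ∈ T, (f i)^2 ≤ ∑ i ∈ T, f i * ∑ j ∈ T, f j := by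
        refine Finset.sum_le_sum fun i hi => ?_
        rw [sq]
        exact mul_le_mul_of_nonneg_left (Finset.single_le_sum hf hi) (hf i hi)
    _ = (∑ i ∈ T, f i)^2 := by rw [← Finset.sum_mul, sq]

/-- The standard simplex on the vertex set `T`. -/
def Spx (T : Finset I) : Set (lp (fun _ : I => ℝ) 2) :=
  {x | (∀ i, 0 ≤ x i) ∧ HasSum (fun i => x i) 1 ∧ ∑ j ∈ T, x j = 1}

theorem Spx.offsupp {T : Finset I} {x : lp (fun _ : I => ℝ) 2} (hx : x ∈ Spx T)
    {i : I} (hi : i ∉ T) : x i = 0 := by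
  have h := sum_le_hasSum (insert i T) (fun j _ => hx.1 j) hx.2.1
  rw [Finset.sum_insert hi, hx.2.2] at h
  have h2 := hx.1 i
  linarith

theorem Spx.mono {T T' : Finset I} (h : T ⊆ T') : Spx T ⊆ Spx T' := by
  intro x hx
  refine ⟨hx.1, hx.2.1, ?_⟩
  have hss := Finset.sum_subset (f := fun j => x j) h (fun i _ hi => Spx.offsupp hx hi)
  rw [← hss]
  exact hx.2.2

theorem Spx.sum_le_one {T T' : Finset I} {x : lp (fun _ : I => ℝ) 2} (hx : x ∈ Spx T) :
    ∑ i ∈ T', x i ≤ 1 := by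
  have h := sum_le_hasSum T' (fun j _ => hx.1 j) hx.2.1
  exact h

theorem Spx.norm_le_one {T : Finset I} {x : lp (fun _ : I => ℝ) 2} (hx : x ∈ Spx T) :
    ‖x‖ ≤ 1 := by
  refine norm_le_of_sq_sum (fun i hi => Spx.offsupp hx hi) zero_le_one ?_
  calc ∑ i ∈ T, (x i)^2 ≤ (∑ i ∈ T, x i)^2 := sq_sum_le (fun i _ => hx.1 i)
    _ = 1^2 := by rw [hx.2.2]

theorem Spx.convex (T : Finset I) : Convex ℝ (Spx T) := by
  intro a ha b hb s t hs ht hst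
  have hcoord : ∀ i, (s • a + t • b) i = s * a i + t * b i := by
    intro i
    simp [lp.coeFn_add, lp.coeFn_smul]
    rfl
  refine ⟨fun i => ?_, ?_, ?_⟩
  · rw [hcoord]
    exact add_nonneg (mul_nonneg hs (ha.1 i)) (mul_nonneg ht (hb.1 i))
  · have H := (ha.2.1.mul_left s).add (hb.2.1.mul_left t)
    simp only [← hcoord] at H
    have hst' : s * 1 + t * 1 = 1 := by rw [mul_one, mul_one, hst]
    rwa [hst'] at H
  · simp_rw [hcoord]
    rw [Finset.sum_add_distrib, ← Finset.mul_sum, ← Finset.mul_sum, ha.2.2, hb.2.2]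
    simpa using hst

theorem continuous_eval (i : I) : Continuous (fun f : lp (fun _ : I => ℝ) 2 => f i) := by
  refine LipschitzWith.continuous (K := 1) ?_
  apply LipschitzWith.of_dist_le_mul
  intro f g
  simp only [NNReal.coe_one, one_mul, dist_eq_norm, Real.norm_eq_abs]
  have h : f i - g i = (f - g) i := by simp [lp.coeFn_sub]
  rw [h]
  exact coord_abs_le_norm _ i

theorem Spx.isClosed (T : Finset I) : IsClosed (Spx T) := by
  classical
  have heq : Spx T = {x : lp (fun _ : I => ℝ) 2 | (∀ i, 0 ≤ x i)}
      ∩ ({x : lp (fun _ : I => ℝ) 2 | ∀ i ∉ T, x i = 0}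
        ∩ {x : lp (fun _ : I => ℝ) 2 | ∑ j ∈ T, x j = 1}) := by
    ext x
    constructor
    · intro hx
      exact ⟨hx.1, fun i hi => Spx.offsupp hx hi, hx.2.2⟩
    · rintro ⟨h1, h2, h3⟩
      refine ⟨h1, ?_, h3⟩
      have H : HasSum (fun i => x i) (∑ i ∈ T, x i) := hasSum_sum_of_ne_finset_zero h2
      rwa [h3] at H
  rw [heq]
  refine IsClosed.inter ?_ (IsClosed.inter ?_ ?_)
  · have : {x : lp (fun _ : I => ℝ) 2 | (∀ i, 0 ≤ x i)} = ⋂ i, {x | 0 ≤ x i} := by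
      ext x; simp [mem_iInter]
    rw [this]
    exact isClosed_iInter fun i => isClosed_le continuous_const (continuous_eval i)
  · have : {x : lp (fun _ : I => ℝ) 2 | ∀ i ∉ T, x i = 0}
        = ⋂ i ∈ (↑T : Set I)ᶜ, {x | x i = 0} := by
      ext x; simp [mem_iInter]
    rw [this]
    exact isClosed_biInter fun i _ => isClosed_eq (continuous_eval i) continuous_const
  · exact isClosed_eq (continuous_finset_sum _ fun i _ => continuous_eval i) continuous_const

theorem Spx.nonempty {T : Finset I} (hT : T.Nonempty) : (Spx T).Nonempty := by
  classical
  obtain ⟨i, hi⟩ := hT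
  have hfin : Set.Finite {j : I | (fun j => if j = i then (1:ℝ) else 0) j ≠ 0} := by
    apply Set.Finite.subset (Set.finite_singleton i)
    intro j hj
    simp only [mem_setOf_eq, ne_eq, ite_eq_right_iff, not_forall] at hj
    exact hj.1
  have hmem : Memℓp (fun j => if j = i then (1:ℝ) else 0) 2 :=
    (memℓp_zero hfin).of_exponent_ge zero_le
  refine ⟨⟨fun j => if j = i then (1:ℝ) else 0, hmem⟩, ?_, ?_, ?_⟩
  · intro j
    show (0:ℝ) ≤ if j = i then (1:ℝ) else 0
    split <;> norm_num
  · show HasSum (fun j => if j = i then (1:ℝ) else 0) 1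
    exact hasSum_ite_eq i 1
  · show ∑ j ∈ T, (if j = i then (1:ℝ) else 0) = 1
    rw [Finset.sum_ite_eq' T i (fun _ => (1:ℝ))]
    exact if_pos hi

theorem exists_proj {T U : Finset I} {x : lp (fun _ : I => ℝ) 2} (hx : x ∈ Spx T)
    (hpos : 0 < ∑ i ∈ T ∩ U, x i) :
    ∃ x', x' ∈ Spx (T ∩ U) ∧ ‖x - x'‖ ≤ 2 * (1 - ∑ i ∈ T ∩ U, x i) := by
  classical
  set F := T ∩ U with hF
  set s := ∑ i ∈ F, x i with hs
  have hFT : F ⊆ T := Finset.inter_subset_left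
  have hs1 : s ≤ 1 := by
    rw [← hx.2.2]
    exact Finset.sum_le_sum_of_subset_of_nonneg hFT (fun i _ _ => hx.1 i)
  have hsne : s ≠ 0 := ne_of_gt hpos
  set f : I → ℝ := fun i => if i ∈ F then s⁻¹ * x i else 0 with hf
  have hfin : Set.Finite {j : I | f j ≠ 0} := by
    apply Set.Finite.subset F.finite_toSet
    intro j hj
    simp only [hf, mem_setOf_eq, ne_eq, ite_eq_right_iff, not_forall] at hj
    exact hj.1
  have hmem : Memℓp f 2 := (memℓp_zero hfin).of_exponent_ge zero_le
  set x' : lp (fun _ : I => ℝ) 2 := ⟨f, hmem⟩ with hx'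
  have hx'app : ∀ i, x' i = f i := fun i => rfl
  have hsumf : ∑ i ∈ F, f i = 1 := by
    simp only [hf]
    rw [Finset.sum_ite_mem, Finset.inter_self, ← Finset.mul_sum, ← hs, inv_mul_cancel₀ hsne]
  refine ⟨x', ⟨?_, ?_, ?_⟩, ?_⟩
  · intro i
    rw [hx'app]
    simp only [hf]
    split
    · exact mul_nonneg (inv_nonneg.mpr hpos.le) (hx.1 _)
    · exact le_rfl
  · have H : HasSum f (∑ i ∈ F, f i) :=
      hasSum_sum_of_ne_finset_zero (fun i hi => by simp [hf, if_neg hi])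
    rw [hsumf] at H
    exact H
  · simpa only [hx'app] using hsumf
  · have hvz : ∀ i ∉ T, (x - x') i = 0 := by
      intro i hi
      have h1 : (x - x') i = x i - x' i := by simp [lp.coeFn_sub]
      rw [h1, Spx.offsupp hx hi, hx'app]
      simp only [hf]
      rw [if_neg (fun hiF => hi (hFT hiF))]
      ring
    refine norm_le_of_sq_sum hvz (by linarith) ?_
    have hsum2 : ∑ i ∈ T \ F, x i = 1 - s := by
      have := Finset.sum_sdiff (f := fun i => x i) hFT
      rw [hx.2.2] at this
      linarith [this]
    have hsplit : ∑ i ∈ T, ((x - x') i)^2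
        = ∑ i ∈ T \ F, ((x - x') i)^2 + ∑ i ∈ F, ((x - x') i)^2 :=
      (Finset.sum_sdiff hFT).symm
    have hcoe : ∀ i, (x - x') i = x i - f i := by
      intro i; simp [lp.coeFn_sub, hx'app]
    have hb1 : ∑ i ∈ T \ F, ((x - x') i)^2 ≤ (1 - s)^2 := by
      calc ∑ i ∈ T \ F, ((x - x') i)^2 = ∑ i ∈ T \ F, (x i)^2 := by
            refine Finset.sum_congr rfl fun i hi => ?_
            rw [hcoe i]
            simp only [hf]
            rw [if_neg (Finset.mem_sdiff.mp hi).2]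
            ring
        _ ≤ (∑ i ∈ T \ F, x i)^2 := sq_sum_le (fun i _ => hx.1 i)
        _ = (1 - s)^2 := by rw [hsum2]
    have hb2 : ∑ i ∈ F, ((x - x') i)^2 ≤ (1 - s)^2 := by
      calc ∑ i ∈ F, ((x - x') i)^2 = ∑ i ∈ F, (1 - s⁻¹)^2 * (x i)^2 := by
            refine Finset.sum_congr rfl fun i hi => ?_
            rw [hcoe i]
            simp only [hf]
            rw [if_pos hi]
            ring
        _ = (1 - s⁻¹)^2 * ∑ i ∈ F, (x i)^2 := by rw [Finset.mul_sum]
        _ ≤ (1 - s⁻¹)^2 * (∑ i ∈ F, x i)^2 :=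
            mul_le_mul_of_nonneg_left (sq_sum_le (fun i _ => hx.1 i)) (sq_nonneg _)
        _ = ((1 - s⁻¹) * s)^2 := by rw [← hs, mul_pow]
        _ = (1 - s)^2 := by
            rw [show (1 - s⁻¹) * s = s - 1 from by field_simp]
            ring
    calc ∑ i ∈ T, ((x - x') i)^2
        = ∑ i ∈ T \ F, ((x - x') i)^2 + ∑ i ∈ F, ((x - x') i)^2 := hsplit
      _ ≤ (1 - s)^2 + (1 - s)^2 := add_le_add hb1 hb2
      _ ≤ (2 * (1 - s))^2 := by nlinarith [sq_nonneg (1 - s)]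


end Lp


theorem numeric {n N : ℕ} (hn : 2 ≤ n) (hN : 2 ≤ N) :
    (N:ℝ)^3 * (n:ℝ)^3 ≤ (N:ℝ) ^ (10 * Real.log n) := by
  have hN2 : (2:ℝ) ≤ (N:ℝ) := by exact_mod_cast hN
  have hn2 : (2:ℝ) ≤ (n:ℝ) := by exact_mod_cast hn
  have hN1 : (1:ℝ) ≤ (N:ℝ) := by linarith
  have hn1 : (1:ℝ) ≤ (n:ℝ) := by linarith
  have hNpos : (0:ℝ) < (N:ℝ) := by linarith
  have hlog2 : (0.6931471803:ℝ) < Real.log 2 := Real.log_two_gt_d9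
  have hlogn : Real.log 2 ≤ Real.log n := Real.log_le_log (by norm_num) hn2
  have hlognpos : (0:ℝ) < Real.log n := by linarith
  have h10 : 10 * Real.log n = 5 * Real.log n + 5 * Real.log n := by ring
  rw [h10, Real.rpow_add hNpos]
  have A : (N:ℝ)^3 ≤ (N:ℝ) ^ (5 * Real.log n) := by
    have h3 : ((3:ℕ):ℝ) ≤ 5 * Real.log n := by push_cast; linarith
    calc (N:ℝ)^3 = (N:ℝ) ^ ((3:ℕ):ℝ) := (Real.rpow_natCast _ 3).symm
      _ ≤ (N:ℝ) ^ (5 * Real.log n) := Real.rpow_le_rpow_of_exponent_le hN1 h3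
  have B : (n:ℝ)^3 ≤ (N:ℝ) ^ (5 * Real.log n) := by
    have h1 : (n:ℝ) ^ ((3:ℕ):ℝ) ≤ (n:ℝ) ^ (5 * Real.log 2) := by
      refine Real.rpow_le_rpow_of_exponent_le hn1 ?_
      push_cast; linarith
    have h2 : (n:ℝ) ^ (5 * Real.log 2) = (2:ℝ) ^ (5 * Real.log n) := by
      rw [Real.rpow_def_of_pos (by linarith : (0:ℝ) < (n:ℝ)),
        Real.rpow_def_of_pos (by norm_num : (0:ℝ) < (2:ℝ))]
      congr 1
      ring
    have h3 : (2:ℝ) ^ (5 * Real.log n) ≤ (N:ℝ) ^ (5 * Real.log n) :=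
      Real.rpow_le_rpow (by norm_num) hN2 (by linarith)
    calc (n:ℝ)^3 = (n:ℝ) ^ ((3:ℕ):ℝ) := (Real.rpow_natCast _ 3).symm
      _ ≤ (n:ℝ) ^ (5 * Real.log 2) := h1
      _ = (2:ℝ) ^ (5 * Real.log n) := h2
      _ ≤ (N:ℝ) ^ (5 * Real.log n) := h3
  exact mul_le_mul A B (by positivity) (by positivity)


end SCQC
/-- A connected pure `n`-dimensional simplicial complex (`n ≥ 2`) in
`Σ(I) ⊆ ℓ₂(I)` with at most `N` `n`-simplices, equipped with the `ℓ₂`-metric, is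
`N^{10·log n}`-quasiconvex: any two of its points are joined by a path inside the
complex of length at most `N^{10·log n}` times their distance. -/
theorem simplicial_complex_quasiconvex {I : Type*} (n N : ℕ) (hn : 2 ≤ n) (hN : 1 ≤ N)
    (J : Fin N → Finset I) (hJ : ∀ k, (J k).card = n + 1)
    (Δ : Fin N → Set (lp (fun _ : I => ℝ) 2))
    (hΔ : ∀ k, Δ k = {x | (∀ i, 0 ≤ x i) ∧ HasSum (fun i => x i) 1 ∧ ∑ j ∈ J k, x j = 1})
    (Sig : Set (lp (fun _ : I => ℝ) 2)) (hSig : Sig = ⋃ k, Δ k)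
    (hconn : IsPathConnected Sig) :
    ∀ x ∈ Sig, ∀ y ∈ Sig, ∃ γ : ℝ → lp (fun _ : I => ℝ) 2,
      ContinuousOn γ (Set.Icc 0 1) ∧ γ 0 = x ∧ γ 1 = y ∧
      (∀ t ∈ Set.Icc (0 : ℝ) 1, γ t ∈ Sig) ∧
      eVariationOn γ (Set.Icc 0 1) ≤
        ENNReal.ofReal ((N : ℝ) ^ (10 * Real.log n) * ‖x - y‖) := by
  classical
  haveI : DecidableEq I := Classical.decEq I
  intro x hx y hy
  have hΔ' : ∀ k, Δ k = SCQC.Spx (J k) := fun k => hΔ k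
  rw [hSig] at hx hy
  obtain ⟨j, hxj⟩ := Set.mem_iUnion.mp hx
  obtain ⟨k, hyk⟩ := Set.mem_iUnion.mp hy
  have hxj' := hxj; rw [hΔ' j] at hxj'
  have hyk' := hyk; rw [hΔ' k] at hyk'
  have hSigSub : ∀ m : Fin N, Δ m ⊆ Sig := fun m => by
    rw [hSig]; exact Set.subset_iUnion Δ m
  have hspxsub : ∀ m : Fin N, SCQC.Spx (J m) ⊆ Sig := fun m => by
    rw [← hΔ' m]; exact hSigSub m
  have hconv : ∀ m : Fin N, Convex ℝ (Δ m) := fun m => by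
    rw [hΔ' m]; exact SCQC.Spx.convex (J m)
  suffices h : SCQC.QCPath Sig x y ((N : ℝ) ^ (10 * Real.log n) * ‖x - y‖) by exact h
  rcases eq_or_lt_of_le hN with hN1 | hN2
  · -- N = 1 : everything is in one simplex
    have hjk : J j = J k := by
      have : j = k := Subsingleton.elim (α := Fin N) (h := by rw [← hN1]; infer_instance) j k
      rw [this]
    have hyj' : y ∈ SCQC.Spx (J j) := by rw [hjk]; exact hyk'
    have hseg : segment ℝ x y ⊆ Sig :=
      ((SCQC.Spx.convex (J j)).segment_subset hxj' hyj').trans (hspxsub j)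
    apply (SCQC.qcpath_segment hseg).mono
    rw [← hN1]
    simp [Real.one_rpow]
  · -- 2 ≤ N
    have hN2' : 2 ≤ N := hN2
    have hnum := SCQC.numeric hn hN2'
    have hN2real : (2:ℝ) ≤ (N:ℝ) := by exact_mod_cast hN2'
    have hn2real : (2:ℝ) ≤ (n:ℝ) := by exact_mod_cast hn
    set ε := ‖x - y‖ with hε
    have hε0 : 0 ≤ ε := norm_nonneg _
    have main : SCQC.QCPath Sig x y ((N:ℝ)^3 * (n:ℝ)^3 * ε) := by
      by_cases hsmall : ε ≤ 1 / (2 * ((n:ℝ) + 1))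
      · -- close points: go through the common face
        have hcoordx : ∀ i ∈ J j \ (J j ∩ J k), x i ≤ ε := by
          intro i hi
          obtain ⟨hiJ, hiF⟩ := Finset.mem_sdiff.mp hi
          have hik : i ∉ J k := fun h => hiF (Finset.mem_inter.mpr ⟨hiJ, h⟩)
          have hyi : y i = 0 := SCQC.Spx.offsupp hyk' hik
          have h2 : |(x - y) i| ≤ ‖x - y‖ := SCQC.coord_abs_le_norm _ i
          have h3 : (x - y) i = x i - y i := by simp [lp.coeFn_sub]
          rw [h3] at h2
          have h4 : x i - y i ≤ |x i - y i| := le_abs_self _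
          rw [hε]
          linarith
        have hcoordy : ∀ i ∈ J k \ (J k ∩ J j), y i ≤ ε := by
          intro i hi
          obtain ⟨hiJ, hiF⟩ := Finset.mem_sdiff.mp hi
          have hij : i ∉ J j := fun h => hiF (Finset.mem_inter.mpr ⟨hiJ, h⟩)
          have hxi : x i = 0 := SCQC.Spx.offsupp hxj' hij
          have h2 : |(x - y) i| ≤ ‖x - y‖ := SCQC.coord_abs_le_norm _ i
          have h3 : (x - y) i = x i - y i := by simp [lp.coeFn_sub]
          rw [h3] at h2
          have h4 : -(x i - y i) ≤ |x i - y i| := neg_le_abs _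
          rw [hε]
          linarith
        have hsdb : ∀ (T F : Finset I) (v : lp (fun _ : I => ℝ) 2), F ⊆ T → T.card = n + 1 →
            (∀ i ∈ T, 0 ≤ v i) → (∑ i ∈ T, v i = 1) → (∀ i ∈ T \ F, v i ≤ ε) →
            1 - ∑ i ∈ F, v i ≤ ((n:ℝ) + 1) * ε := by
          intro T F v hFT hcard hnn hsum hbd
          have hsplit := Finset.sum_sdiff (f := fun i => v i) hFT
          have hb : ∑ i ∈ T \ F, v i ≤ (T \ F).card • ε :=
            Finset.sum_le_card_nsmul _ _ _ hbd
          rw [nsmul_eq_mul] at hb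
          have hcard2 : ((T \ F).card : ℝ) ≤ (n:ℝ) + 1 := by
            have := (Finset.card_le_card (Finset.sdiff_subset (s := T) (t := F))).trans_eq hcard
            exact_mod_cast this
          have hb2 : ((T \ F).card : ℝ) * ε ≤ ((n:ℝ) + 1) * ε :=
            mul_le_mul_of_nonneg_right hcard2 hε0
          rw [hsum] at hsplit
          linarith
        have hhalf : ((n:ℝ)+1) * ε ≤ 1/2 := by
          calc ((n:ℝ)+1)*ε ≤ ((n:ℝ)+1) * (1/(2*((n:ℝ)+1))) :=
                mul_le_mul_of_nonneg_left hsmall (by positivity)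
            _ = 1/2 := by field_simp
        have hsx : 1 - ∑ i ∈ J j ∩ J k, x i ≤ ((n:ℝ) + 1) * ε :=
          hsdb (J j) (J j ∩ J k) x Finset.inter_subset_left (hJ j)
            (fun i _ => hxj'.1 i) hxj'.2.2 hcoordx
        have hsy : 1 - ∑ i ∈ J k ∩ J j, y i ≤ ((n:ℝ) + 1) * ε :=
          hsdb (J k) (J k ∩ J j) y Finset.inter_subset_left (hJ k)
            (fun i _ => hyk'.1 i) hyk'.2.2 hcoordy
        have hposx : 0 < ∑ i ∈ J j ∩ J k, x i := by linarith
        have hposy : 0 < ∑ i ∈ J k ∩ J j, y i := by linarith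
        obtain ⟨x', hx'F, hx'n⟩ := SCQC.exists_proj hxj' hposx
        obtain ⟨y', hy'F, hy'n⟩ := SCQC.exists_proj hyk' hposy
        have hx'j : x' ∈ SCQC.Spx (J j) := SCQC.Spx.mono Finset.inter_subset_left hx'F
        have hy'j : y' ∈ SCQC.Spx (J j) := SCQC.Spx.mono Finset.inter_subset_right hy'F
        have hy'k : y' ∈ SCQC.Spx (J k) := SCQC.Spx.mono Finset.inter_subset_left hy'F
        have p1 := SCQC.qcpath_segment
          (((SCQC.Spx.convex (J j)).segment_subset hxj' hx'j).trans (hspxsub j))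
        have p2 := SCQC.qcpath_segment
          (((SCQC.Spx.convex (J j)).segment_subset hx'j hy'j).trans (hspxsub j))
        have p3 := SCQC.qcpath_segment
          (((SCQC.Spx.convex (J k)).segment_subset hy'k hyk').trans (hspxsub k))
        have ptot := p1.trans (p2.trans p3 (norm_nonneg _) (norm_nonneg _))
          (norm_nonneg _) (add_nonneg (norm_nonneg _) (norm_nonneg _))
        apply ptot.mono
        have a1 : ‖x - x'‖ ≤ 2 * (((n:ℝ)+1) * ε) := by nlinarith [hx'n, hsx]
        have a3 : ‖y - y'‖ ≤ 2 * (((n:ℝ)+1) * ε) := by nlinarith [hy'n, hsy]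
        have a3' : ‖y' - y‖ = ‖y - y'‖ := norm_sub_rev _ _
        have a2 : ‖x' - y'‖ ≤ ‖x - x'‖ + ε + ‖y - y'‖ := by
          have h4 := dist_triangle4 x' x y y'
          rw [dist_eq_norm, dist_eq_norm, dist_eq_norm, dist_eq_norm, norm_sub_rev x' x,
            ← hε] at h4
          linarith
        have hn0 : (0:ℝ) ≤ (n:ℝ) := by linarith
        have m1 : 2*(n:ℝ) ≤ (n:ℝ)*(n:ℝ) := mul_le_mul_of_nonneg_right hn2real hn0
        have m2 : 2*((n:ℝ)*(n:ℝ)) ≤ (n:ℝ)*((n:ℝ)*(n:ℝ)) :=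
          mul_le_mul_of_nonneg_right hn2real (mul_nonneg hn0 hn0)
        have q2 : (4:ℝ)*(n:ℝ) ≤ (n:ℝ)^3 := by nlinarith [m1, m2]
        have hN0 : (0:ℝ) ≤ (N:ℝ) := by linarith
        have w1 : 2*(N:ℝ) ≤ (N:ℝ)*(N:ℝ) := mul_le_mul_of_nonneg_right hN2real hN0
        have w2 : 2*((N:ℝ)*(N:ℝ)) ≤ (N:ℝ)*((N:ℝ)*(N:ℝ)) :=
          mul_le_mul_of_nonneg_right hN2real (mul_nonneg hN0 hN0)
        have q1 : (8:ℝ) ≤ (N:ℝ)^3 := by nlinarith [w1, w2]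
        have q3 : (8:ℝ)*(n:ℝ)^3 ≤ (N:ℝ)^3*(n:ℝ)^3 :=
          mul_le_mul_of_nonneg_right q1 (by positivity)
        have c4 : 8*((n:ℝ)+1) + 1 ≤ (N:ℝ)^3*(n:ℝ)^3 := by linarith [q1, q2, q3, hn2real]
        have c5 : (8*((n:ℝ)+1) + 1) * ε ≤ ((N:ℝ)^3*(n:ℝ)^3) * ε :=
          mul_le_mul_of_nonneg_right c4 hε0
        nlinarith [a1, a2, a3, a3', c5, hε0]
      · -- distant points: walk through the dual graph
        push_neg at hsmall
        set G : SimpleGraph (Fin N) :=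
          SimpleGraph.fromRel (fun a b => (Δ a ∩ Δ b).Nonempty) with hG
        have hnorm2 : ∀ (m : Fin N) (u v : lp (fun _ : I => ℝ) 2),
            u ∈ Δ m → v ∈ Δ m → ‖u - v‖ ≤ 2 := by
          intro m u v hu hv
          rw [hΔ' m] at hu hv
          have h1 : ‖u‖ ≤ 1 := SCQC.Spx.norm_le_one hu
          have h2 : ‖v‖ ≤ 1 := SCQC.Spx.norm_le_one hv
          calc ‖u - v‖ ≤ ‖u‖ + ‖v‖ := norm_sub_le _ _
            _ ≤ 2 := by linarith
        have hwalk : ∀ (a b : Fin N) (w : G.Walk a b), ∀ u v,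
            u ∈ Δ a → v ∈ Δ b → SCQC.QCPath Sig u v (2 * ((w.length : ℝ) + 1)) := by
          intro a b w
          induction w with
          | nil =>
            intro u v hu hv
            apply (SCQC.qcpath_segment
              (((hconv _).segment_subset hu hv).trans (hSigSub _))).mono
            have hb := hnorm2 _ u v hu hv
            simp only [SimpleGraph.Walk.length_nil]
            push_cast
            linarith
          | @cons a' c' b'' hadj w ih =>
            intro u v hu hv
            rw [hG, SimpleGraph.fromRel_adj] at hadj
            have hzex : (Δ a' ∩ Δ c').Nonempty := by
              rcases hadj.2 with h | h
              · exact h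
              · obtain ⟨z, hz⟩ := h; exact ⟨z, hz.2, hz.1⟩
            obtain ⟨z, hza, hzc⟩ := hzex
            have p1 := SCQC.qcpath_segment
              (((hconv a').segment_subset hu hza).trans (hSigSub a'))
            have p2 := ih z v hzc hv
            have ptot := p1.trans p2 (norm_nonneg _) (by positivity)
            apply ptot.mono
            have hb := hnorm2 a' u z hu hza
            simp only [SimpleGraph.Walk.length_cons]
            push_cast
            linarith
        have hne' : ∀ c : Fin N, (Δ c).Nonempty := fun c => by
          rw [hΔ' c]
          exact SCQC.Spx.nonempty (Finset.card_pos.mp (by rw [hJ c]; omega))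
        have hreach : ∀ a b : Fin N, G.Reachable a b := by
          intro a b
          by_contra hab
          set SS : Set (Fin N) := {c | G.Reachable a c} with hSS
          have haS : a ∈ SS := SimpleGraph.Reachable.refl a
          have hbS : b ∈ SSᶜ := hab
          have hUc : IsClosed (⋃ c ∈ SS, Δ c) :=
            (Set.toFinite SS).isClosed_biUnion
              (fun c _ => by rw [hΔ' c]; exact SCQC.Spx.isClosed (J c))
          have hVc : IsClosed (⋃ c ∈ SSᶜ, Δ c) :=
            (Set.toFinite SSᶜ).isClosed_biUnion
              (fun c _ => by rw [hΔ' c]; exact SCQC.Spx.isClosed (J c))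
          have hcover : Sig ⊆ (⋃ c ∈ SS, Δ c) ∪ (⋃ c ∈ SSᶜ, Δ c) := by
            rw [hSig]
            intro z hz
            obtain ⟨c, hc⟩ := Set.mem_iUnion.mp hz
            by_cases hcS : c ∈ SS
            · exact Or.inl (Set.mem_biUnion hcS hc)
            · exact Or.inr (Set.mem_biUnion hcS hc)
          have hU1 : (Sig ∩ ⋃ c ∈ SS, Δ c).Nonempty := by
            obtain ⟨z, hz⟩ := hne' a
            exact ⟨z, hSigSub a hz, Set.mem_biUnion haS hz⟩
          have hV1 : (Sig ∩ ⋃ c ∈ SSᶜ, Δ c).Nonempty := by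
            obtain ⟨z, hz⟩ := hne' b
            exact ⟨z, hSigSub b hz, Set.mem_biUnion hbS hz⟩
          obtain ⟨z, _, hzU, hzV⟩ := isPreconnected_closed_iff.mp
            hconn.isConnected.isPreconnected _ _ hUc hVc hcover hU1 hV1
          rcases Set.mem_iUnion₂.mp hzU with ⟨c, hcS, hzc⟩
          rcases Set.mem_iUnion₂.mp hzV with ⟨d, hdS, hzd⟩
          have hcd : c ≠ d := by rintro rfl; exact hdS hcS
          have hadj : G.Adj c d := by
            rw [hG, SimpleGraph.fromRel_adj]
            exact ⟨hcd, Or.inl ⟨z, hzc, hzd⟩⟩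
          exact hdS (hcS.trans hadj.reachable)
        obtain ⟨w0⟩ := hreach j k
        have hlen : w0.toPath.1.length < N := by
          simpa [Fintype.card_fin] using SimpleGraph.Walk.IsPath.length_lt w0.toPath.2
        apply (hwalk j k w0.toPath.1 x y hxj hyk).mono
        have hlenR : ((w0.toPath.1.length : ℝ) + 1) ≤ (N:ℝ) := by
          have : w0.toPath.1.length + 1 ≤ N := hlen
          exact_mod_cast this
        have hεl : 1/(2*((n:ℝ)+1)) ≤ ε := le_of_lt hsmall
        have hn0 : (0:ℝ) ≤ (n:ℝ) := by linarith
        have hN0 : (0:ℝ) ≤ (N:ℝ) := by linarith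
        have m1 : 2*(n:ℝ) ≤ (n:ℝ)*(n:ℝ) := mul_le_mul_of_nonneg_right hn2real hn0
        have m2 : 2*((n:ℝ)*(n:ℝ)) ≤ (n:ℝ)*((n:ℝ)*(n:ℝ)) :=
          mul_le_mul_of_nonneg_right hn2real (mul_nonneg hn0 hn0)
        have w1 : 2*(N:ℝ) ≤ (N:ℝ)*(N:ℝ) := mul_le_mul_of_nonneg_right hN2real hN0
        have w2 : 2*((N:ℝ)*(N:ℝ)) ≤ (N:ℝ)*((N:ℝ)*(N:ℝ)) :=
          mul_le_mul_of_nonneg_right hN2real (mul_nonneg hN0 hN0)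
        have k1 : (n:ℝ)+1 ≤ (n:ℝ)^3 := by nlinarith [m1, m2]
        have k2 : (4:ℝ)*(N:ℝ) ≤ (N:ℝ)^3 := by nlinarith [w1, w2]
        have hkey : (4:ℝ)*(N:ℝ)*((n:ℝ)+1) ≤ (N:ℝ)^3*(n:ℝ)^3 := by
          have k3 : (0:ℝ) ≤ (n:ℝ)+1 := by linarith
          have k4 : (0:ℝ) ≤ (N:ℝ)^3 := by positivity
          calc (4:ℝ)*(N:ℝ)*((n:ℝ)+1) = ((4:ℝ)*(N:ℝ))*((n:ℝ)+1) := by ring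
            _ ≤ (N:ℝ)^3*(n:ℝ)^3 := mul_le_mul k2 k1 k3 k4
        have e1 : 2*((w0.toPath.1.length:ℝ)+1) ≤ 2*(N:ℝ) := by linarith
        have e2 : (2*(N:ℝ)) = (4*(N:ℝ)*((n:ℝ)+1)) * (1/(2*((n:ℝ)+1))) := by
          field_simp
          ring
        have e3 : (4*(N:ℝ)*((n:ℝ)+1)) * (1/(2*((n:ℝ)+1))) ≤ ((N:ℝ)^3*(n:ℝ)^3) * ε :=
          mul_le_mul hkey hεl (by positivity) (by positivity)
        linarith [e1, e2.le, e3]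
    apply main.mono
    exact mul_le_mul_of_nonneg_right hnum hε0
end
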